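/- arXiv:2302.12718 — 6 statements merged into one kernel-verified Lean document; each statement's English description precedes it below -/
import Mathlib

section
/- Interventional at-risk distribution for the total effect: under Assumption 1, for every k ∈ {1,…,K}, every x with P(X = x) > 0 and every a ∈ {0,1}, P(X = x | Ȳ^a_{k−1} = 0, D̄^a_k = 0) = [P(X = x)·(1 − h_D(k,x,a))·Π_{l=1}^{k−1} (1 − h_D(l,x,a))·(1 − h_Y(l,x,a))] / P(Ȳ^a_{k−1} = 0, D̄^a_k = 0); i.e., it differs from the observational at-risk covariate distribution only through the absence of the treatment-assignment factor P(A = a | X = x). -/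
/-!
STATEMENT 5: Interventional at-risk distribution for the total effect. Under
Assumption 1, for every `k ∈ {1,…,K}`, every `x` with `P(X = x) > 0` and every
`a ∈ {0,1}`,
`P(X = x | Ȳ^a_{k−1} = 0, D̄^a_k = 0)
  = [P(X = x)·(1 − h_D(k,x,a))·Π_{l=1}^{k−1} (1 − h_D(l,x,a))·(1 − h_Y(l,x,a))]
      / P(Ȳ^a_{k−1} = 0, D̄^a_k = 0)`;
i.e. it differs from the observational at-risk covariate distribution only through
the absence of the treatment-assignment factor `P(A = a | X = x)`.
-/

open MeasureTheory ProbabilityTheory Finset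
open scoped ENNReal

noncomputable section

namespace Stmt5

variable {Ω 𝓧 : Type*} [MeasurableSpace Ω] [MeasurableSpace 𝓧] [MeasurableSingletonClass 𝓧]

/-- The event that the history `V̄_k = (V_1, …, V_k)` is identically zero; for `k = 0`
this is all of `Ω` (the convention `V̄_0 = 0`). -/
def allZero (V : ℕ → Ω → ℕ) (k : ℕ) : Set Ω :=
  {ω | ∀ l, 1 ≤ l → l ≤ k → V l ω = 0}

/-- Conditioning event of the main-event hazard `h_Y(k,x,a)`:
`{D̄_k = 0, Ȳ_{k−1} = 0, X = x, A = a}` (the competing event is resolved before the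
main event within each interval). -/
def atRiskY (Y D : ℕ → Ω → ℕ) (X : Ω → 𝓧) (A : Ω → ℕ) (k : ℕ) (x : 𝓧) (a : ℕ) : Set Ω :=
  allZero D k ∩ allZero Y (k - 1) ∩ {ω | X ω = x} ∩ {ω | A ω = a}

/-- Conditioning event of the competing-event hazard `h_D(k,x,a)`:
`{D̄_{k−1} = 0, Ȳ_{k−1} = 0, X = x, A = a}`. -/
def atRiskD (Y D : ℕ → Ω → ℕ) (X : Ω → 𝓧) (A : Ω → ℕ) (k : ℕ) (x : 𝓧) (a : ℕ) : Set Ω :=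
  allZero D (k - 1) ∩ allZero Y (k - 1) ∩ {ω | X ω = x} ∩ {ω | A ω = a}

/-- Conditional hazard of the main event,
`h_Y(k,x,a) = P(Y_k = 1 | D̄_k = 0, Ȳ_{k−1} = 0, X = x, A = a)`. -/
def hazY (μ : Measure Ω) (Y D : ℕ → Ω → ℕ) (X : Ω → 𝓧) (A : Ω → ℕ)
    (k : ℕ) (x : 𝓧) (a : ℕ) : ℝ≥0∞ :=
  μ[|atRiskY Y D X A k x a] {ω | Y k ω = 1}

/-- Conditional hazard of the competing event,
`h_D(k,x,a) = P(D_k = 1 | D̄_{k−1} = 0, Ȳ_{k−1} = 0, X = x, A = a)`. -/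
def hazD (μ : Measure Ω) (Y D : ℕ → Ω → ℕ) (X : Ω → 𝓧) (A : Ω → ℕ)
    (k : ℕ) (x : 𝓧) (a : ℕ) : ℝ≥0∞ :=
  μ[|atRiskD Y D X A k x a] {ω | D k ω = 1}

/-! ### Auxiliary lemmas -/

lemma allZero_meas (V : ℕ → Ω → ℕ) (hV : ∀ l, Measurable (V l)) (k : ℕ) :
    MeasurableSet (allZero V k) := by
  have h : allZero V k = ⋂ l ∈ Finset.Icc 1 k, {ω | V l ω = 0} := by
    ext ω
    simp only [allZero, Set.mem_setOf_eq, Set.mem_iInter, Finset.mem_Icc]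
    constructor
    · intro h l hl; exact h l hl.1 hl.2
    · intro h l h1 h2; exact h l ⟨h1, h2⟩
  rw [h]
  exact MeasurableSet.biInter (Finset.Icc 1 k).countable_toSet
    (fun l _ => hV l (measurableSet_singleton 0))

lemma allZero_succ (V : ℕ → Ω → ℕ) (l : ℕ) (hl : 1 ≤ l) :
    allZero V l = allZero V (l - 1) ∩ {ω | V l ω = 0} := by
  ext ω
  simp only [allZero, Set.mem_inter_iff, Set.mem_setOf_eq]
  constructor
  · intro h; exact ⟨fun j h1 h2 => h j h1 (by omega), h l hl le_rfl⟩
  · rintro ⟨h1, h2⟩ j hj1 hj2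
    rcases eq_or_ne j l with rfl | hne
    · exact h2
    · exact h1 j hj1 (by omega)

lemma atRiskY_meas (Y D : ℕ → Ω → ℕ) (X : Ω → 𝓧) (A : Ω → ℕ)
    (hXm : Measurable X) (hAm : Measurable A)
    (hYm : ∀ k, Measurable (Y k)) (hDm : ∀ k, Measurable (D k))
    (k : ℕ) (x : 𝓧) (a : ℕ) : MeasurableSet (atRiskY Y D X A k x a) :=
  (((allZero_meas D hDm k).inter (allZero_meas Y hYm (k - 1))).inter
    (hXm (measurableSet_singleton x))).inter (hAm (measurableSet_singleton a))

lemma atRiskD_meas (Y D : ℕ → Ω → ℕ) (X : Ω → 𝓧) (A : Ω → ℕ)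
    (hXm : Measurable X) (hAm : Measurable A)
    (hYm : ∀ k, Measurable (Y k)) (hDm : ∀ k, Measurable (D k))
    (k : ℕ) (x : 𝓧) (a : ℕ) : MeasurableSet (atRiskD Y D X A k x a) :=
  (((allZero_meas D hDm (k - 1)).inter (allZero_meas Y hYm (k - 1))).inter
    (hXm (measurableSet_singleton x))).inter (hAm (measurableSet_singleton a))

lemma atRiskD_one (Y D : ℕ → Ω → ℕ) (X : Ω → 𝓧) (A : Ω → ℕ) (x : 𝓧) (a : ℕ) :
    atRiskD Y D X A 1 x a = {ω | X ω = x} ∩ {ω | A ω = a} := by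
  ext ω
  simp only [atRiskD, allZero, Set.mem_inter_iff, Set.mem_setOf_eq]
  constructor
  · rintro ⟨⟨⟨-, -⟩, hX⟩, hA⟩; exact ⟨hX, hA⟩
  · rintro ⟨hX, hA⟩
    exact ⟨⟨⟨fun l h1 h0 => by omega, fun l h1 h0 => by omega⟩, hX⟩, hA⟩

lemma atRiskY_eq (Y D : ℕ → Ω → ℕ) (X : Ω → 𝓧) (A : Ω → ℕ) (l : ℕ) (hl : 1 ≤ l)
    (x : 𝓧) (a : ℕ) :
    atRiskY Y D X A l x a = atRiskD Y D X A l x a ∩ {ω | D l ω = 0} := by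
  rw [atRiskY, atRiskD, allZero_succ D l hl]
  ext ω
  simp only [Set.mem_inter_iff, Set.mem_setOf_eq]
  tauto

lemma atRiskD_succ (Y D : ℕ → Ω → ℕ) (X : Ω → 𝓧) (A : Ω → ℕ) (l : ℕ) (hl : 1 ≤ l)
    (x : 𝓧) (a : ℕ) :
    atRiskD Y D X A (l + 1) x a = atRiskY Y D X A l x a ∩ {ω | Y l ω = 0} := by
  have h1 : l + 1 - 1 = l := rfl
  rw [atRiskD, atRiskY, h1, allZero_succ Y l hl]
  ext ω
  simp only [Set.mem_inter_iff, Set.mem_setOf_eq]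
  tauto

/-- Core conditional-probability step. -/
lemma cond_step (μ : Measure Ω) [IsProbabilityMeasure μ] {E : Set Ω} (hE : MeasurableSet E)
    (h0 : μ E ≠ 0) {V : Ω → ℕ} (hV : Measurable V) (hbin : ∀ ω, V ω = 0 ∨ V ω = 1) :
    μ (E ∩ {ω | V ω = 0}) = μ E * (1 - μ[|E] {ω | V ω = 1}) := by
  have hc : {ω | V ω = 0} = {ω | V ω = 1}ᶜ := by
    ext ω
    simp only [Set.mem_setOf_eq, Set.mem_compl_iff]
    rcases hbin ω with h | h <;> simp [h]
  have hpm : IsProbabilityMeasure (μ[|E]) := cond_isProbabilityMeasure h0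
  have hm1 : MeasurableSet {ω | V ω = 1} := hV (measurableSet_singleton 1)
  rw [← prob_compl_eq_one_sub hm1, ← hc, cond_apply hE, ← mul_assoc,
    ENNReal.mul_inv_cancel h0 (measure_ne_top μ E), one_mul]

/-- Product formula for the at-risk probability. -/
lemma prod_formula (μ : Measure Ω) [IsProbabilityMeasure μ]
    (Y D : ℕ → Ω → ℕ) (X : Ω → 𝓧) (A : Ω → ℕ)
    (hXm : Measurable X) (hAm : Measurable A)
    (hYm : ∀ k, Measurable (Y k)) (hDm : ∀ k, Measurable (D k))
    (hYbin : ∀ k ω, Y k ω = 0 ∨ Y k ω = 1) (hDbin : ∀ k ω, D k ω = 0 ∨ D k ω = 1)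
    (x : 𝓧) (a : ℕ) :
    ∀ k, 1 ≤ k →
      (∀ l, 1 ≤ l → l ≤ k → μ (atRiskY Y D X A l x a) ≠ 0) →
      (∀ l, 1 ≤ l → l ≤ k → μ (atRiskD Y D X A l x a) ≠ 0) →
      μ (atRiskY Y D X A k x a)
        = μ ({ω | X ω = x} ∩ {ω | A ω = a}) * (1 - hazD μ Y D X A k x a)
          * ∏ l ∈ Icc 1 (k - 1),
              (1 - hazD μ Y D X A l x a) * (1 - hazY μ Y D X A l x a) := by
  intro k
  induction k with
  | zero => omega
  | succ n ih =>
    intro _ hpY hpD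
    rcases Nat.eq_zero_or_pos n with rfl | hn
    · -- base case k = 1
      have h1 : (1 : ℕ) - 1 = 0 := rfl
      rw [h1, show Icc 1 0 = (∅ : Finset ℕ) from Finset.Icc_eq_empty (by omega),
        Finset.prod_empty, mul_one,
        atRiskY_eq Y D X A 1 le_rfl x a,
        cond_step μ (atRiskD_meas Y D X A hXm hAm hYm hDm 1 x a)
          (hpD 1 le_rfl le_rfl) (hDm 1) (hDbin 1),
        hazD, atRiskD_one Y D X A x a]
    · -- step case k = m + 2
      obtain ⟨m, rfl⟩ : ∃ m, n = m + 1 := ⟨n - 1, by omega⟩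
      have h1 : μ (atRiskY Y D X A (m + 2) x a)
          = μ (atRiskD Y D X A (m + 2) x a) * (1 - hazD μ Y D X A (m + 2) x a) := by
        rw [atRiskY_eq Y D X A (m + 2) (by omega) x a]
        exact cond_step μ (atRiskD_meas Y D X A hXm hAm hYm hDm (m + 2) x a)
          (hpD (m + 2) (by omega) le_rfl) (hDm _) (hDbin _)
      have h2 : μ (atRiskD Y D X A (m + 2) x a)
          = μ (atRiskY Y D X A (m + 1) x a) * (1 - hazY μ Y D X A (m + 1) x a) := by
        rw [atRiskD_succ Y D X A (m + 1) (by omega) x a]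
        exact cond_step μ (atRiskY_meas Y D X A hXm hAm hYm hDm (m + 1) x a)
          (hpY (m + 1) (by omega) (by omega)) (hYm _) (hYbin _)
      rw [h1, h2, ih (by omega) (fun l hl1 hl2 => hpY l hl1 (by omega))
        (fun l hl1 hl2 => hpD l hl1 (by omega))]
      have h3 : m + 2 - 1 = m + 1 := rfl
      have h4 : m + 1 - 1 = m := rfl
      rw [h3, h4, Finset.prod_Icc_succ_top (by omega : 1 ≤ m + 1)]
      ring

/-- If two measures agree on all atoms of a countable discrete target, they agree on
all preimages. -/
lemma measure_preimage_eq (ν₁ ν₂ : Measure Ω) {γ : Type*} [Countable γ] [MeasurableSpace γ]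
    [MeasurableSingletonClass γ] {T : Ω → γ} (hT : Measurable T)
    (h : ∀ t, ν₁ (T ⁻¹' {t}) = ν₂ (T ⁻¹' {t})) (C : Set γ) :
    ν₁ (T ⁻¹' C) = ν₂ (T ⁻¹' C) := by
  have hC : T ⁻¹' C = ⋃ t ∈ C, T ⁻¹' {t} := by
    ext ω
    simp only [Set.mem_preimage, Set.mem_iUnion, Set.mem_singleton_iff]
    constructor
    · intro h'; exact ⟨T ω, h', rfl⟩
    · rintro ⟨t, ht, rfl⟩; exact ht
  have hcnt : C.Countable := C.to_countable
  have hd : C.PairwiseDisjoint fun t => T ⁻¹' {t} := by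
    intro s _ t _ hst
    apply Set.disjoint_left.mpr
    intro ω h1 h2
    exact hst ((Set.mem_preimage.mp h1).symm.trans (Set.mem_preimage.mp h2))
  rw [hC, measure_biUnion hcnt hd (fun t _ => hT (measurableSet_singleton t)),
    measure_biUnion hcnt hd (fun t _ => hT (measurableSet_singleton t))]
  exact tsum_congr fun t => h t

theorem total_effect_interventional_at_risk_distribution
    (μ : Measure Ω) [IsProbabilityMeasure μ]
    (Y D : ℕ → Ω → ℕ) (X : Ω → 𝓧) (A : Ω → ℕ)
    -- measurability of the random variables
    (hXm : Measurable X) (hAm : Measurable A)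
    (hYm : ∀ k, Measurable (Y k)) (hDm : ∀ k, Measurable (D k))
    -- binary indicators, absorbing events, mutual exclusivity
    (hYbin : ∀ k ω, Y k ω = 0 ∨ Y k ω = 1) (hDbin : ∀ k ω, D k ω = 0 ∨ D k ω = 1)
    (hYmono : ∀ k ω, Y k ω ≤ Y (k + 1) ω) (hDmono : ∀ k ω, D k ω ≤ D (k + 1) ω)
    (hexcl : ∀ k ω, Y k ω * D k ω = 0)
    (hAbin : ∀ ω, A ω = 0 ∨ A ω = 1)
    (K : ℕ) (hK : 1 ≤ K)
    -- counterfactual indicators Y^a_k, D^a_k under the intervention do(A = a)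
    (Ycf Dcf : ℕ → ℕ → Ω → ℕ)
    (hYcfm : ∀ a k, Measurable (Ycf a k)) (hDcfm : ∀ a k, Measurable (Dcf a k))
    (hYcfbin : ∀ a k ω, Ycf a k ω = 0 ∨ Ycf a k ω = 1)
    (hDcfbin : ∀ a k ω, Dcf a k ω = 0 ∨ Dcf a k ω = 1)
    (hYcfmono : ∀ a k ω, Ycf a k ω ≤ Ycf a (k + 1) ω)
    (hDcfmono : ∀ a k ω, Dcf a k ω ≤ Dcf a (k + 1) ω)
    (hcfexcl : ∀ a k ω, Ycf a k ω * Dcf a k ω = 0)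
    -- Assumption 1 (i): exchangeability — the family (Y^a_1, D^a_1, …, Y^a_K, D^a_K)
    -- is conditionally independent of A given X (stated through the atoms of the
    -- discrete counterfactual family)
    (hexch : ∀ a a' x, (a = 0 ∨ a = 1) → (a' = 0 ∨ a' = 1) →
      μ {ω | X ω = x} ≠ 0 → μ ({ω | X ω = x} ∩ {ω | A ω = a'}) ≠ 0 →
      ∀ f g : ℕ → ℕ,
        μ[|{ω | X ω = x} ∩ {ω | A ω = a'}]
            {ω | ∀ j, 1 ≤ j → j ≤ K → (Ycf a j ω = f j ∧ Dcf a j ω = g j)}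
          = μ[|{ω | X ω = x}]
              {ω | ∀ j, 1 ≤ j → j ≤ K → (Ycf a j ω = f j ∧ Dcf a j ω = g j)})
    -- Assumption 1 (ii): positivity
    (hposA : ∀ x, μ {ω | X ω = x} ≠ 0 → ∀ a', (a' = 0 ∨ a' = 1) →
      μ ({ω | X ω = x} ∩ {ω | A ω = a'}) ≠ 0)
    -- Assumption 1 (iii): consistency
    (hconsY : ∀ k ω, Y k ω = A ω * Ycf 1 k ω + (1 - A ω) * Ycf 0 k ω)
    (hconsD : ∀ k ω, D k ω = A ω * Dcf 1 k ω + (1 - A ω) * Dcf 0 k ω)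
    (k : ℕ) (hk1 : 1 ≤ k) (hkK : k ≤ K)
    (x : 𝓧) (a : ℕ) (ha : a = 0 ∨ a = 1)
    -- positivity of all conditioning events appearing in the statement
    (hposX : μ {ω | X ω = x} ≠ 0)
    (hposY : ∀ l, 1 ≤ l → l ≤ k → μ (atRiskY Y D X A l x a) ≠ 0)
    (hposD : ∀ l, 1 ≤ l → l ≤ k → μ (atRiskD Y D X A l x a) ≠ 0)
    (hposInt : μ (allZero (Ycf a) (k - 1) ∩ allZero (Dcf a) k) ≠ 0) :
    μ[|allZero (Ycf a) (k - 1) ∩ allZero (Dcf a) k] {ω | X ω = x}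
      = (μ {ω | X ω = x} * (1 - hazD μ Y D X A k x a)
            * ∏ l ∈ Icc 1 (k - 1),
                (1 - hazD μ Y D X A l x a) * (1 - hazY μ Y D X A l x a))
          / μ (allZero (Ycf a) (k - 1) ∩ allZero (Dcf a) k) := by
  have hposXA : μ ({ω | X ω = x} ∩ {ω | A ω = a}) ≠ 0 := hposA x hposX a ha
  have hmX : MeasurableSet {ω | X ω = x} := hXm (measurableSet_singleton x)
  have hmA : MeasurableSet {ω | A ω = a} := hAm (measurableSet_singleton a)
  have hmXA : MeasurableSet ({ω | X ω = x} ∩ {ω | A ω = a}) := hmX.inter hmA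
  have hmB : MeasurableSet (allZero (Ycf a) (k - 1) ∩ allZero (Dcf a) k) :=
    (allZero_meas (Ycf a) (hYcfm a) _).inter (allZero_meas (Dcf a) (hDcfm a) _)
  -- consistency: under A = a the factuals coincide with the counterfactuals
  have hAeq : ∀ ω, A ω = a → (∀ j, Y j ω = Ycf a j ω) ∧ (∀ j, D j ω = Dcf a j ω) := by
    intro ω hA
    constructor <;> intro j
    · have h := hconsY j ω
      rcases ha with rfl | rfl <;> rw [hA] at h <;> simpa using h
    · have h := hconsD j ω
      rcases ha with rfl | rfl <;> rw [hA] at h <;> simpa using h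
  have hcons : ({ω | X ω = x} ∩ {ω | A ω = a})
      ∩ (allZero (Ycf a) (k - 1) ∩ allZero (Dcf a) k) = atRiskY Y D X A k x a := by
    ext ω
    simp only [Set.mem_inter_iff, Set.mem_setOf_eq, atRiskY, allZero]
    constructor
    · rintro ⟨⟨hX, hA⟩, hYc, hDc⟩
      obtain ⟨hYe, hDe⟩ := hAeq ω hA
      exact ⟨⟨⟨fun l h1 h2 => by rw [hDe]; exact hDc l h1 h2,
               fun l h1 h2 => by rw [hYe]; exact hYc l h1 h2⟩, hX⟩, hA⟩
    · rintro ⟨⟨⟨hDc, hYc⟩, hX⟩, hA⟩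
      obtain ⟨hYe, hDe⟩ := hAeq ω hA
      exact ⟨⟨hX, hA⟩, fun l h1 h2 => by rw [← hYe]; exact hYc l h1 h2,
             fun l h1 h2 => by rw [← hDe]; exact hDc l h1 h2⟩
  -- exchangeability extended from atoms to the at-risk event
  have hx : μ[|{ω | X ω = x} ∩ {ω | A ω = a}]
        (allZero (Ycf a) (k - 1) ∩ allZero (Dcf a) k)
      = μ[|{ω | X ω = x}] (allZero (Ycf a) (k - 1) ∩ allZero (Dcf a) k) := by
    set T : Ω → (Fin K → ℕ × ℕ) :=
      fun ω i => (Ycf a ((i : ℕ) + 1) ω, Dcf a ((i : ℕ) + 1) ω) with hTdef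
    have hTm : Measurable T := measurable_pi_lambda _
      fun i => ((hYcfm a ((i : ℕ) + 1)).prodMk (hDcfm a ((i : ℕ) + 1)))
    have hatom : ∀ t, μ[|{ω | X ω = x} ∩ {ω | A ω = a}] (T ⁻¹' {t})
        = μ[|{ω | X ω = x}] (T ⁻¹' {t}) := by
      intro t
      have hset : T ⁻¹' {t} = {ω | ∀ j, 1 ≤ j → j ≤ K →
          (Ycf a j ω = (fun j => if h : 1 ≤ j ∧ j ≤ K then (t ⟨j - 1, by omega⟩).1 else 0) j
            ∧ Dcf a j ω
              = (fun j => if h : 1 ≤ j ∧ j ≤ K then (t ⟨j - 1, by omega⟩).2 else 0) j)} := by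
        ext ω
        simp only [Set.mem_preimage, Set.mem_singleton_iff, Set.mem_setOf_eq]
        constructor
        · intro h j hj1 hjK
          have hjm : j - 1 < K := by omega
          have h' := congrFun h ⟨j - 1, hjm⟩
          simp only [hTdef] at h'
          have hj' : j - 1 + 1 = j := by omega
          rw [hj'] at h'
          rw [dif_pos ⟨hj1, hjK⟩, dif_pos ⟨hj1, hjK⟩]
          exact ⟨congrArg Prod.fst h', congrArg Prod.snd h'⟩
        · intro h
          funext i
          have hi1 : (1 : ℕ) ≤ (i : ℕ) + 1 := by omega
          have hiK : (i : ℕ) + 1 ≤ K := i.isLt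
          obtain ⟨h1, h2⟩ := h ((i : ℕ) + 1) hi1 hiK
          rw [dif_pos ⟨hi1, hiK⟩] at h1
          rw [dif_pos ⟨hi1, hiK⟩] at h2
          show (Ycf a ((i : ℕ) + 1) ω, Dcf a ((i : ℕ) + 1) ω) = t i
          exact Prod.ext_iff.mpr ⟨h1, h2⟩
      rw [hset]
      exact hexch a a x ha ha hposX hposXA _ _
    have hB : allZero (Ycf a) (k - 1) ∩ allZero (Dcf a) k
        = T ⁻¹' {t | ∀ i : Fin K,
            (((i : ℕ) + 1 ≤ k - 1 → (t i).1 = 0) ∧ ((i : ℕ) + 1 ≤ k → (t i).2 = 0))} := by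
      ext ω
      simp only [Set.mem_inter_iff, Set.mem_setOf_eq, Set.mem_preimage, allZero, hTdef]
      constructor
      · rintro ⟨hY0, hD0⟩ i
        exact ⟨fun h => hY0 ((i : ℕ) + 1) (by omega) h,
               fun h => hD0 ((i : ℕ) + 1) (by omega) h⟩
      · intro h
        constructor
        · intro j hj1 hj2
          have hjm : j - 1 < K := by omega
          have h' := (h ⟨j - 1, hjm⟩).1
          simp only [Fin.val_mk] at h'
          rw [show j - 1 + 1 = j by omega] at h'
          exact h' hj2
        · intro j hj1 hj2
          have hjm : j - 1 < K := by omega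
          have h' := (h ⟨j - 1, hjm⟩).2
          simp only [Fin.val_mk] at h'
          rw [show j - 1 + 1 = j by omega] at h'
          exact h' hj2
    rw [hB]
    exact measure_preimage_eq _ _ hTm hatom _
  -- product formula
  have hprod := prod_formula μ Y D X A hXm hAm hYm hDm hYbin hDbin x a k hk1 hposY hposD
  -- conditional probability of the at-risk event given X = x, A = a
  have h1 : μ[|{ω | X ω = x} ∩ {ω | A ω = a}]
        (allZero (Ycf a) (k - 1) ∩ allZero (Dcf a) k)
      = (1 - hazD μ Y D X A k x a)
        * ∏ l ∈ Icc 1 (k - 1),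
            (1 - hazD μ Y D X A l x a) * (1 - hazY μ Y D X A l x a) := by
    rw [cond_apply hmXA μ, hcons, hprod, mul_assoc, ← mul_assoc
        (μ ({ω | X ω = x} ∩ {ω | A ω = a}))⁻¹,
      ENNReal.inv_mul_cancel hposXA (measure_ne_top μ _), one_mul]
  have hXB : μ ({ω | X ω = x} ∩ (allZero (Ycf a) (k - 1) ∩ allZero (Dcf a) k))
      = μ {ω | X ω = x}
        * μ[|{ω | X ω = x}] (allZero (Ycf a) (k - 1) ∩ allZero (Dcf a) k) := by
    rw [cond_apply hmX μ, ← mul_assoc,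
      ENNReal.mul_inv_cancel hposX (measure_ne_top μ _), one_mul]
  rw [cond_apply hmB μ,
    Set.inter_comm (allZero (Ycf a) (k - 1) ∩ allZero (Dcf a) k) {ω | X ω = x},
    hXB, ← hx, h1, ENNReal.div_eq_inv_mul]
  ring

end Stmt5
end
end

section
/- Identification of the direct effect: under Assumptions 1 and 2, for every x with P(X = x) > 0 and every a ∈ {0,1}, the risk under elimination of the competing event satisfies P(Y^{a,d̄=0}_K = 1 | X = x) = Σ_{l=1}^{K} h_Y(l,x,a)·Π_{q=1}^{l−1} (1 − h_Y(q,x,a)), i.e. the dependence on the competing-event hazard h_D is removed and the competing event is treated as a source of independent censoring. -/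
/-!
STATEMENT 6: Identification of the direct effect. Under Assumptions 1 and 2, for
every `x` with `P(X = x) > 0` and every `a ∈ {0,1}`, the risk under elimination of
the competing event satisfies
`P(Y^{a,d̄=0}_K = 1 | X = x) = Σ_{l=1}^{K} h_Y(l,x,a)·Π_{q=1}^{l−1} (1 − h_Y(q,x,a))`,
i.e. the dependence on the competing-event hazard `h_D` is removed and the competing
event is treated as a source of independent censoring.
-/

open MeasureTheory ProbabilityTheory Finset
open scoped ENNReal

noncomputable section

namespace Stmt6

variable {Ω 𝓧 : Type*} [MeasurableSpace Ω] [MeasurableSpace 𝓧] [MeasurableSingletonClass 𝓧]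

/-- The event that the history `V̄_k = (V_1, …, V_k)` is identically zero; for `k = 0`
this is all of `Ω` (the convention `V̄_0 = 0`). -/
def allZero (V : ℕ → Ω → ℕ) (k : ℕ) : Set Ω :=
  {ω | ∀ l, 1 ≤ l → l ≤ k → V l ω = 0}

/-- Conditioning event of the main-event hazard `h_Y(k,x,a)`:
`{D̄_k = 0, Ȳ_{k−1} = 0, X = x, A = a}` (the competing event is resolved before the
main event within each interval). -/
def atRiskY (Y D : ℕ → Ω → ℕ) (X : Ω → 𝓧) (A : Ω → ℕ) (k : ℕ) (x : 𝓧) (a : ℕ) : Set Ω :=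
  allZero D k ∩ allZero Y (k - 1) ∩ {ω | X ω = x} ∩ {ω | A ω = a}

/-- Conditioning event of the competing-event hazard `h_D(k,x,a)`:
`{D̄_{k−1} = 0, Ȳ_{k−1} = 0, X = x, A = a}`. -/
def atRiskD (Y D : ℕ → Ω → ℕ) (X : Ω → 𝓧) (A : Ω → ℕ) (k : ℕ) (x : 𝓧) (a : ℕ) : Set Ω :=
  allZero D (k - 1) ∩ allZero Y (k - 1) ∩ {ω | X ω = x} ∩ {ω | A ω = a}

/-- Conditional hazard of the main event,
`h_Y(k,x,a) = P(Y_k = 1 | D̄_k = 0, Ȳ_{k−1} = 0, X = x, A = a)`. -/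
def hazY (μ : Measure Ω) (Y D : ℕ → Ω → ℕ) (X : Ω → 𝓧) (A : Ω → ℕ)
    (k : ℕ) (x : 𝓧) (a : ℕ) : ℝ≥0∞ :=
  μ[|atRiskY Y D X A k x a] {ω | Y k ω = 1}

/-- Conditional hazard of the competing event,
`h_D(k,x,a) = P(D_k = 1 | D̄_{k−1} = 0, Ȳ_{k−1} = 0, X = x, A = a)`. -/
def hazD (μ : Measure Ω) (Y D : ℕ → Ω → ℕ) (X : Ω → 𝓧) (A : Ω → ℕ)
    (k : ℕ) (x : 𝓧) (a : ℕ) : ℝ≥0∞ :=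
  μ[|atRiskD Y D X A k x a] {ω | D k ω = 1}

lemma measurableSet_allZero {V : ℕ → Ω → ℕ} (hV : ∀ l, Measurable (V l)) (k : ℕ) :
    MeasurableSet (allZero V k) := by
  have h : allZero V k = ⋂ (l : ℕ) (_ : 1 ≤ l) (_ : l ≤ k), (V l) ⁻¹' {0} := by
    ext ω; simp [allZero]
  rw [h]
  exact MeasurableSet.iInter fun l => MeasurableSet.iInter fun _ =>
    MeasurableSet.iInter fun _ => (hV l) (measurableSet_singleton 0)

lemma allZero_succ (V : ℕ → Ω → ℕ) (k : ℕ) (hk : 1 ≤ k) :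
    allZero V k = allZero V (k - 1) ∩ {ω | V k ω = 0} := by
  ext ω
  simp only [allZero, Set.mem_inter_iff, Set.mem_setOf_eq]
  constructor
  · exact fun h => ⟨fun l h1 h2 => h l h1 (by omega), h k hk le_rfl⟩
  · rintro ⟨h1, h2⟩ l hl1 hl2
    rcases eq_or_ne l k with rfl | hne
    · exact h2
    · exact h1 l hl1 (by omega)

lemma allZero_zero (V : ℕ → Ω → ℕ) : allZero V 0 = Set.univ := by
  ext ω; simp only [allZero, Set.mem_setOf_eq, Set.mem_univ, iff_true]
  intro l h1 h2; omega

lemma cond_congr_of_inter_eq (μ : Measure Ω) {c s t : Set Ω} (hc : MeasurableSet c)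
    (h : c ∩ s = c ∩ t) : μ[|c] s = μ[|c] t := by
  rw [cond_apply hc, cond_apply hc, h]

lemma cond_inter_chain (μ : Measure Ω) [IsFiniteMeasure μ] {c s t : Set Ω}
    (hc : MeasurableSet c) (hs : MeasurableSet s) (hcs0 : μ (c ∩ s) ≠ 0) :
    μ[|c] (s ∩ t) = μ[|c] s * μ[|(c ∩ s)] t := by
  rw [cond_apply hc, cond_apply hc, cond_apply (hc.inter hs), ← Set.inter_assoc]
  have hne : μ (c ∩ s) ≠ ⊤ := measure_ne_top μ _
  calc (μ c)⁻¹ * μ (c ∩ s ∩ t)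
      = (μ c)⁻¹ * ((μ (c ∩ s) * (μ (c ∩ s))⁻¹) * μ (c ∩ s ∩ t)) := by
        rw [ENNReal.mul_inv_cancel hcs0 hne, one_mul]
    _ = (μ c)⁻¹ * μ (c ∩ s) * ((μ (c ∩ s))⁻¹ * μ (c ∩ s ∩ t)) := by ring

lemma tele_sum (K : ℕ) (h : ℕ → ℝ≥0∞) (hle : ∀ q ∈ Icc 1 K, h q ≤ 1) :
    ∑ l ∈ Icc 1 K, h l * ∏ q ∈ Icc 1 (l - 1), (1 - h q)
      = 1 - ∏ q ∈ Icc 1 K, (1 - h q) := by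
  induction K with
  | zero => simp
  | succ K ih =>
    have hle' : ∀ q ∈ Icc 1 K, h q ≤ 1 := by
      intro q hq; refine hle q ?_; simp only [mem_Icc] at hq ⊢; omega
    have hP : ∏ q ∈ Icc 1 K, (1 - h q) ≤ 1 :=
      Finset.prod_le_one (fun _ _ => zero_le) (fun q _ => tsub_le_self)
    have hh : h (K + 1) ≤ 1 := hle _ (by simp only [mem_Icc]; omega)
    rw [Finset.sum_Icc_succ_top (by omega), Finset.prod_Icc_succ_top (by omega), ih hle']
    set P := ∏ q ∈ Icc 1 K, (1 - h q) with hPdef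
    have hKs : K + 1 - 1 = K := by omega
    rw [hKs, ← hPdef]
    refine (ENNReal.sub_eq_of_eq_add ?_ ?_).symm
    · exact ne_top_of_le_ne_top ENNReal.one_ne_top (mul_le_one' hP tsub_le_self)
    · have e1 : h (K + 1) * P + P * (1 - h (K + 1)) = P := by
        rw [mul_comm (h (K + 1)) P, ← mul_add, add_tsub_cancel_of_le hh, mul_one]
      calc (1 : ℝ≥0∞) = (1 - P) + P := (tsub_add_cancel_of_le hP).symm
        _ = (1 - P) + (h (K + 1) * P + P * (1 - h (K + 1))) := by rw [e1]
        _ = 1 - P + h (K + 1) * P + P * (1 - h (K + 1)) := by rw [add_assoc]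


theorem direct_effect_identification
    (μ : Measure Ω) [IsProbabilityMeasure μ]
    (Y D : ℕ → Ω → ℕ) (X : Ω → 𝓧) (A : Ω → ℕ)
    -- measurability of the random variables
    (hXm : Measurable X) (hAm : Measurable A)
    (hYm : ∀ k, Measurable (Y k)) (hDm : ∀ k, Measurable (D k))
    -- binary indicators, absorbing events, mutual exclusivity
    (hYbin : ∀ k ω, Y k ω = 0 ∨ Y k ω = 1) (hDbin : ∀ k ω, D k ω = 0 ∨ D k ω = 1)
    (hYmono : ∀ k ω, Y k ω ≤ Y (k + 1) ω) (hDmono : ∀ k ω, D k ω ≤ D (k + 1) ω)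
    (hexcl : ∀ k ω, Y k ω * D k ω = 0)
    (hAbin : ∀ ω, A ω = 0 ∨ A ω = 1)
    (K : ℕ) (hK : 1 ≤ K)
    -- counterfactual indicators Y^a_k, D^a_k under the intervention do(A = a)
    (Ycf Dcf : ℕ → ℕ → Ω → ℕ)
    (hYcfm : ∀ a k, Measurable (Ycf a k)) (hDcfm : ∀ a k, Measurable (Dcf a k))
    (hYcfbin : ∀ a k ω, Ycf a k ω = 0 ∨ Ycf a k ω = 1)
    (hDcfbin : ∀ a k ω, Dcf a k ω = 0 ∨ Dcf a k ω = 1)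
    (hYcfmono : ∀ a k ω, Ycf a k ω ≤ Ycf a (k + 1) ω)
    (hDcfmono : ∀ a k ω, Dcf a k ω ≤ Dcf a (k + 1) ω)
    (hcfexcl : ∀ a k ω, Ycf a k ω * Dcf a k ω = 0)
    -- Assumption 1 (i): exchangeability — the family (Y^a_1, D^a_1, …, Y^a_K, D^a_K)
    -- is conditionally independent of A given X (stated through the atoms of the
    -- discrete counterfactual family)
    (hexch : ∀ a a' x, (a = 0 ∨ a = 1) → (a' = 0 ∨ a' = 1) →
      μ {ω | X ω = x} ≠ 0 → μ ({ω | X ω = x} ∩ {ω | A ω = a'}) ≠ 0 →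
      ∀ f g : ℕ → ℕ,
        μ[|{ω | X ω = x} ∩ {ω | A ω = a'}]
            {ω | ∀ j, 1 ≤ j → j ≤ K → (Ycf a j ω = f j ∧ Dcf a j ω = g j)}
          = μ[|{ω | X ω = x}]
              {ω | ∀ j, 1 ≤ j → j ≤ K → (Ycf a j ω = f j ∧ Dcf a j ω = g j)})
    -- Assumption 1 (ii): positivity
    (hposA : ∀ x, μ {ω | X ω = x} ≠ 0 → ∀ a', (a' = 0 ∨ a' = 1) →
      μ ({ω | X ω = x} ∩ {ω | A ω = a'}) ≠ 0)
    -- Assumption 1 (iii): consistency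
    (hconsY : ∀ k ω, Y k ω = A ω * Ycf 1 k ω + (1 - A ω) * Ycf 0 k ω)
    (hconsD : ∀ k ω, D k ω = A ω * Dcf 1 k ω + (1 - A ω) * Dcf 0 k ω)
    -- counterfactual indicators Y^{a,d̄=0}_k under the joint intervention
    -- do(A = a, D̄_K = 0) eliminating the competing event
    (Ycf0 : ℕ → ℕ → Ω → ℕ)
    (hYcf0m : ∀ a k, Measurable (Ycf0 a k))
    (hYcf0bin : ∀ a k ω, Ycf0 a k ω = 0 ∨ Ycf0 a k ω = 1)
    (hYcf0mono : ∀ a k ω, Ycf0 a k ω ≤ Ycf0 a (k + 1) ω)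
    -- (Y^{a,d̄=0}_1, …, Y^{a,d̄=0}_K) is conditionally independent of A given X
    -- (stated through the atoms of the discrete counterfactual family)
    (hexch0 : ∀ a a' x, (a = 0 ∨ a = 1) → (a' = 0 ∨ a' = 1) →
      μ {ω | X ω = x} ≠ 0 → μ ({ω | X ω = x} ∩ {ω | A ω = a'}) ≠ 0 →
      ∀ f : ℕ → ℕ,
        μ[|{ω | X ω = x} ∩ {ω | A ω = a'}]
            {ω | ∀ j, 1 ≤ j → j ≤ K → Ycf0 a j ω = f j}
          = μ[|{ω | X ω = x}] {ω | ∀ j, 1 ≤ j → j ≤ K → Ycf0 a j ω = f j})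
    -- Assumption 2 (i): sequential exchangeability — (Y^{a,d̄=0}_k, …, Y^{a,d̄=0}_K)
    -- is conditionally independent of D_k given X = x, A = a, Ȳ_{k−1} = D̄_{k−1} = 0
    (hseqexch : ∀ a x k, (a = 0 ∨ a = 1) → 1 ≤ k → k ≤ K →
      μ ({ω | X ω = x} ∩ {ω | A ω = a} ∩ allZero Y (k - 1) ∩ allZero D (k - 1)) ≠ 0 →
      μ ({ω | X ω = x} ∩ {ω | A ω = a} ∩ allZero Y (k - 1) ∩ allZero D (k - 1)
          ∩ {ω | D k ω = 0}) ≠ 0 →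
      ∀ f : ℕ → ℕ,
        μ[|{ω | X ω = x} ∩ {ω | A ω = a} ∩ allZero Y (k - 1) ∩ allZero D (k - 1)
            ∩ {ω | D k ω = 0}]
            {ω | ∀ l, k ≤ l → l ≤ K → Ycf0 a l ω = f l}
          = μ[|{ω | X ω = x} ∩ {ω | A ω = a} ∩ allZero Y (k - 1) ∩ allZero D (k - 1)]
              {ω | ∀ l, k ≤ l → l ≤ K → Ycf0 a l ω = f l})
    -- Assumption 2 (ii): positivity w.r.t. the competing event
    (hposDcomp : ∀ a x k, (a = 0 ∨ a = 1) → 1 ≤ k → k ≤ K →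
      μ ({ω | X ω = x} ∩ {ω | A ω = a} ∩ allZero Y (k - 1) ∩ allZero D (k - 1)) ≠ 0 →
      μ ({ω | X ω = x} ∩ {ω | A ω = a} ∩ allZero Y (k - 1) ∩ allZero D (k - 1)
          ∩ {ω | D k ω = 0}) ≠ 0)
    -- Assumption 2 (iii): consistency w.r.t. elimination of the competing event:
    -- on the event {A = a, D̄_k = 0} one has Ȳ_k = Ȳ^{a,d̄=0}_k
    (hcons0 : ∀ a ω k, (a = 0 ∨ a = 1) → k ≤ K → A ω = a →
      (∀ l, 1 ≤ l → l ≤ k → D l ω = 0) →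
      ∀ l, 1 ≤ l → l ≤ k → Y l ω = Ycf0 a l ω)
    (hK : 1 ≤ K) (x : 𝓧) (a : ℕ) (ha : a = 0 ∨ a = 1)
    -- positivity of all conditioning events appearing in the statement
    (hposX : μ {ω | X ω = x} ≠ 0)
    (hposY : ∀ l, 1 ≤ l → l ≤ K → μ (atRiskY Y D X A l x a) ≠ 0)
    (hposD : ∀ l, 1 ≤ l → l ≤ K → μ (atRiskD Y D X A l x a) ≠ 0) :
    μ[|{ω | X ω = x}] {ω | Ycf0 a K ω = 1}
      = ∑ l ∈ Icc 1 K,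
          hazY μ Y D X A l x a
            * ∏ q ∈ Icc 1 (l - 1), (1 - hazY μ Y D X A q x a) := by

  classical
  -- basic measurable sets
  have hXsm : MeasurableSet {ω | X ω = x} := hXm (measurableSet_singleton x)
  have hAsm : MeasurableSet {ω | A ω = a} := hAm (measurableSet_singleton a)
  have hBm : ∀ k : ℕ, MeasurableSet
      ({ω | X ω = x} ∩ {ω | A ω = a} ∩ allZero Y (k - 1) ∩ allZero D (k - 1)) :=
    fun k => ((hXsm.inter hAsm).inter (measurableSet_allZero hYm _)).inter
      (measurableSet_allZero hDm _)
  have hCm : ∀ k : ℕ, MeasurableSet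
      ({ω | X ω = x} ∩ {ω | A ω = a} ∩ allZero Y (k - 1) ∩ allZero D (k - 1)
        ∩ {ω | D k ω = 0}) :=
    fun k => (hBm k).inter ((hDm k) (measurableSet_singleton 0))
  -- identification of the at-risk sets
  have hBeq : ∀ k : ℕ, atRiskD Y D X A k x a
      = {ω | X ω = x} ∩ {ω | A ω = a} ∩ allZero Y (k - 1) ∩ allZero D (k - 1) := by
    intro k; ext ω
    simp only [atRiskD, Set.mem_inter_iff, Set.mem_setOf_eq]
    tauto
  have hCeq : ∀ k : ℕ, 1 ≤ k → atRiskY Y D X A k x a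
      = {ω | X ω = x} ∩ {ω | A ω = a} ∩ allZero Y (k - 1) ∩ allZero D (k - 1)
        ∩ {ω | D k ω = 0} := by
    intro k hk; ext ω
    simp only [atRiskY, allZero_succ D k hk, Set.mem_inter_iff, Set.mem_setOf_eq]
    tauto
  have hμB : ∀ k, 1 ≤ k → k ≤ K →
      μ ({ω | X ω = x} ∩ {ω | A ω = a} ∩ allZero Y (k - 1) ∩ allZero D (k - 1)) ≠ 0 :=
    fun k h1 h2 => (hBeq k) ▸ hposD k h1 h2
  have hμC : ∀ k, 1 ≤ k → k ≤ K →
      μ ({ω | X ω = x} ∩ {ω | A ω = a} ∩ allZero Y (k - 1) ∩ allZero D (k - 1)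
        ∩ {ω | D k ω = 0}) ≠ 0 :=
    fun k h1 h2 => (hCeq k h1) ▸ hposY k h1 h2
  -- consistency on the at-risk set
  have hconsC : ∀ k, 1 ≤ k → k ≤ K → ∀ ω,
      ω ∈ {ω | X ω = x} ∩ {ω | A ω = a} ∩ allZero Y (k - 1) ∩ allZero D (k - 1)
            ∩ {ω | D k ω = 0} →
      Y k ω = Ycf0 a k ω := by
    intro k h1 h2 ω hω
    obtain ⟨⟨⟨⟨hXω, hAω⟩, hYz⟩, hDz⟩, hDk⟩ := hω
    have hDall : ∀ l, 1 ≤ l → l ≤ k → D l ω = 0 := by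
      intro l hl1 hl2
      rcases eq_or_ne l k with rfl | hne
      · exact hDk
      · exact hDz l hl1 (by omega)
    exact hcons0 a ω k ha h2 hAω hDall k h1 le_rfl
  have hYcompl : ∀ k : ℕ, {ω | Y k ω = 0} = {ω | Y k ω = 1}ᶜ := by
    intro k; ext ω
    simp only [Set.mem_compl_iff, Set.mem_setOf_eq]
    rcases hYbin k ω with h | h <;> omega
  have hhaz : ∀ k, 1 ≤ k → k ≤ K →
      μ[|{ω | X ω = x} ∩ {ω | A ω = a} ∩ allZero Y (k - 1) ∩ allZero D (k - 1)
          ∩ {ω | D k ω = 0}] {ω | Y k ω = 0}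
        = 1 - hazY μ Y D X A k x a := by
    intro k h1 h2
    haveI := cond_isProbabilityMeasure (μ := μ) (hμC k h1 h2)
    have hm1 : MeasurableSet {ω | Y k ω = 1} := (hYm k) (measurableSet_singleton 1)
    rw [hYcompl k, prob_compl_eq_one_sub hm1]
    unfold hazY
    rw [hCeq k h1]
  -- the key downward induction
  have key : ∀ n k : ℕ, 1 ≤ k → k + n = K →
      μ[|{ω | X ω = x} ∩ {ω | A ω = a} ∩ allZero Y (k - 1) ∩ allZero D (k - 1)]
        {ω | ∀ l, k ≤ l → l ≤ K → Ycf0 a l ω = 0}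
      = ∏ q ∈ Icc k K, (1 - hazY μ Y D X A q x a) := by
    intro n
    induction n with
    | zero =>
      intro k hk1 hkK
      have hkK' : k = K := by omega
      subst hkK'
      have hseq := hseqexch a x k ha hk1 le_rfl (hμB k hk1 le_rfl) (hμC k hk1 le_rfl)
        (fun _ => 0)
      rw [Finset.Icc_self, Finset.prod_singleton, ← hseq]
      have hEK : {ω | ∀ l, k ≤ l → l ≤ k → Ycf0 a l ω = 0} = {ω | Ycf0 a k ω = 0} := by
        ext ω
        simp only [Set.mem_setOf_eq]
        constructor
        · exact fun h => h k le_rfl le_rfl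
        · intro h l hl1 hl2
          have hlk : l = k := le_antisymm hl2 hl1
          rwa [hlk]
      rw [hEK]
      have hinter : ({ω | X ω = x} ∩ {ω | A ω = a} ∩ allZero Y (k - 1) ∩ allZero D (k - 1)
            ∩ {ω | D k ω = 0}) ∩ {ω | Ycf0 a k ω = 0}
          = ({ω | X ω = x} ∩ {ω | A ω = a} ∩ allZero Y (k - 1) ∩ allZero D (k - 1)
            ∩ {ω | D k ω = 0}) ∩ {ω | Y k ω = 0} := by
        ext ω
        constructor
        · rintro ⟨hω, h0⟩
          exact ⟨hω, show Y k ω = 0 from (hconsC k hk1 le_rfl ω hω).trans h0⟩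
        · rintro ⟨hω, h0⟩
          exact ⟨hω, show Ycf0 a k ω = 0 from (hconsC k hk1 le_rfl ω hω).symm.trans h0⟩
      rw [cond_congr_of_inter_eq μ (hCm k) hinter, hhaz k hk1 le_rfl]
    | succ n ih =>
      intro k hk1 hkK
      have hkK' : k ≤ K := by omega
      have hk1K : k + 1 ≤ K := by omega
      have hseq := hseqexch a x k ha hk1 hkK' (hμB k hk1 hkK') (hμC k hk1 hkK') (fun _ => 0)
      rw [← hseq]
      have hEsplit : {ω | ∀ l, k ≤ l → l ≤ K → Ycf0 a l ω = 0}
          = {ω | Ycf0 a k ω = 0} ∩ {ω | ∀ l, k + 1 ≤ l → l ≤ K → Ycf0 a l ω = 0} := by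
        ext ω
        simp only [Set.mem_inter_iff, Set.mem_setOf_eq]
        constructor
        · exact fun h => ⟨h k le_rfl hkK', fun l hl1 hl2 => h l (by omega) hl2⟩
        · rintro ⟨h0, h⟩ l hl1 hl2
          rcases eq_or_ne l k with rfl | hne
          · exact h0
          · exact h l (by omega) hl2
      rw [hEsplit]
      have hinter : ({ω | X ω = x} ∩ {ω | A ω = a} ∩ allZero Y (k - 1) ∩ allZero D (k - 1)
            ∩ {ω | D k ω = 0})
            ∩ ({ω | Ycf0 a k ω = 0} ∩ {ω | ∀ l, k + 1 ≤ l → l ≤ K → Ycf0 a l ω = 0})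
          = ({ω | X ω = x} ∩ {ω | A ω = a} ∩ allZero Y (k - 1) ∩ allZero D (k - 1)
            ∩ {ω | D k ω = 0})
            ∩ ({ω | Y k ω = 0} ∩ {ω | ∀ l, k + 1 ≤ l → l ≤ K → Ycf0 a l ω = 0}) := by
        ext ω
        constructor
        · rintro ⟨hω, h0, hrest⟩
          exact ⟨hω, show Y k ω = 0 from (hconsC k hk1 hkK' ω hω).trans h0, hrest⟩
        · rintro ⟨hω, h0, hrest⟩
          exact ⟨hω, show Ycf0 a k ω = 0 from (hconsC k hk1 hkK' ω hω).symm.trans h0, hrest⟩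
      rw [cond_congr_of_inter_eq μ (hCm k) hinter]
      have hBsucc : ({ω | X ω = x} ∩ {ω | A ω = a} ∩ allZero Y (k - 1) ∩ allZero D (k - 1)
            ∩ {ω | D k ω = 0}) ∩ {ω | Y k ω = 0}
          = {ω | X ω = x} ∩ {ω | A ω = a} ∩ allZero Y (k + 1 - 1)
            ∩ allZero D (k + 1 - 1) := by
        have e1 : k + 1 - 1 = k := by omega
        rw [e1, allZero_succ Y k hk1, allZero_succ D k hk1]
        ext ω
        simp only [Set.mem_inter_iff, Set.mem_setOf_eq]
        tauto
      have hY0m : MeasurableSet {ω | Y k ω = 0} := (hYm k) (measurableSet_singleton 0)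
      rw [cond_inter_chain μ (hCm k) hY0m
        (by rw [hBsucc]; exact hμB (k + 1) (by omega) hk1K)]
      rw [hhaz k hk1 hkK', hBsucc, ih (k + 1) (by omega) (by omega)]
      have hprod : ∏ q ∈ Icc k K, (1 - hazY μ Y D X A q x a)
          = (1 - hazY μ Y D X A k x a)
            * ∏ q ∈ Icc (k + 1) K, (1 - hazY μ Y D X A q x a) := by
        rw [← Finset.Ico_add_one_right_eq_Icc k K,
          Finset.prod_eq_prod_Ico_succ_bot (by omega : k < K + 1), Finset.Ico_add_one_right_eq_Icc]
      rw [hprod]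
  -- final assembly
  have hμXA : μ ({ω | X ω = x} ∩ {ω | A ω = a}) ≠ 0 := hposA x hposX a ha
  have hE1m : MeasurableSet {ω | ∀ l, 1 ≤ l → l ≤ K → Ycf0 a l ω = 0} :=
    measurableSet_allZero (hYcf0m a) K
  have hmono0 : ∀ ω, ∀ l m : ℕ, l ≤ m → Ycf0 a l ω ≤ Ycf0 a m ω := by
    intro ω l m hlm
    induction m, hlm using Nat.le_induction with
    | base => exact le_rfl
    | succ m hm ihm => exact le_trans ihm (hYcf0mono a m ω)
  have hset1 : {ω | Ycf0 a K ω = 1}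
      = {ω | ∀ l, 1 ≤ l → l ≤ K → Ycf0 a l ω = 0}ᶜ := by
    ext ω
    simp only [Set.mem_compl_iff, Set.mem_setOf_eq]
    constructor
    · intro h hall
      have h2 := hall K hK le_rfl
      omega
    · intro h
      rcases hYcf0bin a K ω with h5 | h5
      · exfalso
        apply h
        intro l hl1 hl2
        have h4 := hmono0 ω l K hl2
        omega
      · exact h5
  haveI : IsProbabilityMeasure (μ[|{ω | X ω = x}]) := cond_isProbabilityMeasure hposX
  rw [hset1, prob_compl_eq_one_sub hE1m]
  have hex := hexch0 a a x ha ha hposX hμXA (fun _ => 0)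
  rw [← hex]
  have hB1 : {ω | X ω = x} ∩ {ω | A ω = a}
      = {ω | X ω = x} ∩ {ω | A ω = a} ∩ allZero Y (1 - 1) ∩ allZero D (1 - 1) := by
    rw [show (1 : ℕ) - 1 = 0 from rfl, allZero_zero, allZero_zero, Set.inter_univ,
      Set.inter_univ]
  rw [hB1, key (K - 1) 1 le_rfl (by omega)]
  have hle : ∀ q ∈ Icc 1 K, hazY μ Y D X A q x a ≤ 1 := by
    intro q hq
    simp only [mem_Icc] at hq
    haveI := cond_isProbabilityMeasure (μ := μ) (hposY q hq.1 hq.2)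
    unfold hazY
    exact prob_le_one
  exact (tele_sum K _ hle).symm


end Stmt6
end
end

section
/- Interventional at-risk distribution for the direct effect: under Assumptions 1 and 2, for every k ∈ {1,…,K}, every x with P(X = x) > 0 and every a ∈ {0,1}, P(X = x | Ȳ^{a,d̄=0}_{k−1} = 0) = [P(X = x)·Π_{l=1}^{k−1} (1 − h_Y(l,x,a))] / P(Ȳ^{a,d̄=0}_{k−1} = 0); i.e., relative to the observational at-risk covariate distribution, both the treatment-assignment factor P(A = a | X = x) and all competing-event factors (1 − h_D(l,x,a)) are removed. -/
/-!
STATEMENT 7: Interventional at-risk distribution for the direct effect. Under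
Assumptions 1 and 2, for every `k ∈ {1,…,K}`, every `x` with `P(X = x) > 0` and
every `a ∈ {0,1}`,
`P(X = x | Ȳ^{a,d̄=0}_{k−1} = 0)
  = [P(X = x)·Π_{l=1}^{k−1} (1 − h_Y(l,x,a))] / P(Ȳ^{a,d̄=0}_{k−1} = 0)`;
i.e. relative to the observational at-risk covariate distribution, both the
treatment-assignment factor `P(A = a | X = x)` and all competing-event factors
`(1 − h_D(l,x,a))` are removed.
-/

open MeasureTheory ProbabilityTheory Finset
open scoped ENNReal

noncomputable section

namespace Stmt7

variable {Ω 𝓧 : Type*} [MeasurableSpace Ω] [MeasurableSpace 𝓧] [MeasurableSingletonClass 𝓧]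

/-- The event that the history `V̄_k = (V_1, …, V_k)` is identically zero; for `k = 0`
this is all of `Ω` (the convention `V̄_0 = 0`). -/
def allZero (V : ℕ → Ω → ℕ) (k : ℕ) : Set Ω :=
  {ω | ∀ l, 1 ≤ l → l ≤ k → V l ω = 0}

/-- Conditioning event of the main-event hazard `h_Y(k,x,a)`:
`{D̄_k = 0, Ȳ_{k−1} = 0, X = x, A = a}` (the competing event is resolved before the
main event within each interval). -/
def atRiskY (Y D : ℕ → Ω → ℕ) (X : Ω → 𝓧) (A : Ω → ℕ) (k : ℕ) (x : 𝓧) (a : ℕ) : Set Ω :=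
  allZero D k ∩ allZero Y (k - 1) ∩ {ω | X ω = x} ∩ {ω | A ω = a}

/-- Conditioning event of the competing-event hazard `h_D(k,x,a)`:
`{D̄_{k−1} = 0, Ȳ_{k−1} = 0, X = x, A = a}`. -/
def atRiskD (Y D : ℕ → Ω → ℕ) (X : Ω → 𝓧) (A : Ω → ℕ) (k : ℕ) (x : 𝓧) (a : ℕ) : Set Ω :=
  allZero D (k - 1) ∩ allZero Y (k - 1) ∩ {ω | X ω = x} ∩ {ω | A ω = a}

/-- Conditional hazard of the main event,
`h_Y(k,x,a) = P(Y_k = 1 | D̄_k = 0, Ȳ_{k−1} = 0, X = x, A = a)`. -/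
def hazY (μ : Measure Ω) (Y D : ℕ → Ω → ℕ) (X : Ω → 𝓧) (A : Ω → ℕ)
    (k : ℕ) (x : 𝓧) (a : ℕ) : ℝ≥0∞ :=
  μ[|atRiskY Y D X A k x a] {ω | Y k ω = 1}

/-- Conditional hazard of the competing event,
`h_D(k,x,a) = P(D_k = 1 | D̄_{k−1} = 0, Ȳ_{k−1} = 0, X = x, A = a)`. -/
def hazD (μ : Measure Ω) (Y D : ℕ → Ω → ℕ) (X : Ω → 𝓧) (A : Ω → ℕ)
    (k : ℕ) (x : 𝓧) (a : ℕ) : ℝ≥0∞ :=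
  μ[|atRiskD Y D X A k x a] {ω | D k ω = 1}

lemma allZero_zero (V : ℕ → Ω → ℕ) : allZero V 0 = Set.univ := by
  ext ω
  simp only [allZero, Set.mem_setOf_eq, Set.mem_univ, iff_true]
  intro l h1 h0
  omega

lemma measurableSet_allZero {V : ℕ → Ω → ℕ} (hV : ∀ l, Measurable (V l)) (k : ℕ) :
    MeasurableSet (allZero V k) := by
  have h : allZero V k = ⋂ (l : ℕ) (_ : 1 ≤ l) (_ : l ≤ k), {ω | V l ω = 0} := by
    ext ω; simp [allZero]
  rw [h]
  exact MeasurableSet.iInter fun l => MeasurableSet.iInter fun _ =>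
    MeasurableSet.iInter fun _ => hV l (measurableSet_singleton 0)

lemma allZero_succ (V : ℕ → Ω → ℕ) (j : ℕ) :
    allZero V (j + 1) = allZero V j ∩ {ω | V (j + 1) ω = 0} := by
  ext ω
  simp only [allZero, Set.mem_inter_iff, Set.mem_setOf_eq]
  constructor
  · intro h; exact ⟨fun l h1 h2 => h l h1 (by omega), h (j + 1) (by omega) le_rfl⟩
  · rintro ⟨h1, h2⟩ l hl1 hl2
    rcases Nat.lt_or_ge l (j + 1) with h | h
    · exact h1 l hl1 (by omega)
    · have hl : l = j + 1 := by omega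
      subst hl; exact h2

/-- If two measures agree on all "atoms" of the family `(W l)_{j ≤ l ≤ K}`, and each
`W l` is binary, then they agree on the event `{W m = 0}` for any `j ≤ m ≤ K`. -/
lemma measure_eq_of_atoms (ν₁ ν₂ : Measure Ω) (W : ℕ → Ω → ℕ)
    (hWm : ∀ l, Measurable (W l)) (hWbin : ∀ l ω, W l ω = 0 ∨ W l ω = 1)
    (j K m : ℕ) (hjm : j ≤ m) (hmK : m ≤ K)
    (h : ∀ f : ℕ → ℕ,
      ν₁ {ω | ∀ l, j ≤ l → l ≤ K → W l ω = f l}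
        = ν₂ {ω | ∀ l, j ≤ l → l ≤ K → W l ω = f l}) :
    ν₁ {ω | W m ω = 0} = ν₂ {ω | W m ω = 0} := by
  classical
  let f : Finset ℕ → ℕ → ℕ := fun s l => if l ∈ s then 1 else 0
  let E : Finset ℕ → Set Ω := fun s => {ω | ∀ l, j ≤ l → l ≤ K → W l ω = f s l}
  let T : Finset (Finset ℕ) := (Finset.Icc j K).powerset.filter (fun s => m ∉ s)
  have hEmeas : ∀ s, MeasurableSet (E s) := by
    intro s
    have hEe : E s = ⋂ (l : ℕ) (_ : j ≤ l) (_ : l ≤ K), {ω | W l ω = f s l} := by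
      ext ω; simp [E]
    rw [hEe]
    exact MeasurableSet.iInter fun l => MeasurableSet.iInter fun _ =>
      MeasurableSet.iInter fun _ => hWm l (measurableSet_singleton _)
  have hcover : {ω | W m ω = 0} = ⋃ s ∈ T, E s := by
    ext ω
    simp only [Set.mem_setOf_eq, Set.mem_iUnion, exists_prop]
    constructor
    · intro h0
      refine ⟨(Finset.Icc j K).filter (fun l => W l ω = 1), ?_, ?_⟩
      · simp only [T, Finset.mem_filter, Finset.mem_powerset]
        refine ⟨Finset.filter_subset _ _, fun hc => ?_⟩
        have := hc.2
        omega
      · intro l hjl hlK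
        rcases hWbin l ω with h1 | h1 <;>
          simp [E, f, Finset.mem_filter, Finset.mem_Icc, h1, hjl, hlK]
    · rintro ⟨s, hsT, hωs⟩
      have hm0 := hωs m hjm hmK
      simp only [T, Finset.mem_filter, Finset.mem_powerset] at hsT
      simpa [f, hsT.2] using hm0
  have hdisj : (↑T : Set (Finset ℕ)).PairwiseDisjoint E := by
    intro s hs t ht hst
    simp only [Function.onFun, Set.disjoint_left]
    intro ω hωs hωt
    apply hst
    simp only [Finset.mem_coe, T, Finset.mem_filter, Finset.mem_powerset] at hs ht
    apply Finset.ext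
    intro l
    by_cases hl : l ∈ Finset.Icc j K
    · rw [Finset.mem_Icc] at hl
      have h1 : W l ω = f s l := hωs l hl.1 hl.2
      have h2 : W l ω = f t l := hωt l hl.1 hl.2
      have : f s l = f t l := h1 ▸ h2
      by_cases hls : l ∈ s <;> by_cases hlt : l ∈ t <;> simp_all [f]
    · constructor
      · intro hls; exact absurd (hs.1 hls) hl
      · intro hlt; exact absurd (ht.1 hlt) hl
  rw [hcover, measure_biUnion_finset hdisj (fun s _ => hEmeas s),
      measure_biUnion_finset hdisj (fun s _ => hEmeas s)]
  exact Finset.sum_congr rfl fun s _ => h (f s)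

theorem direct_effect_interventional_at_risk_distribution
    (μ : Measure Ω) [IsProbabilityMeasure μ]
    (Y D : ℕ → Ω → ℕ) (X : Ω → 𝓧) (A : Ω → ℕ)
    -- measurability of the random variables
    (hXm : Measurable X) (hAm : Measurable A)
    (hYm : ∀ k, Measurable (Y k)) (hDm : ∀ k, Measurable (D k))
    -- binary indicators, absorbing events, mutual exclusivity
    (hYbin : ∀ k ω, Y k ω = 0 ∨ Y k ω = 1) (hDbin : ∀ k ω, D k ω = 0 ∨ D k ω = 1)
    (hYmono : ∀ k ω, Y k ω ≤ Y (k + 1) ω) (hDmono : ∀ k ω, D k ω ≤ D (k + 1) ω)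
    (hexcl : ∀ k ω, Y k ω * D k ω = 0)
    (hAbin : ∀ ω, A ω = 0 ∨ A ω = 1)
    (K : ℕ) (hK : 1 ≤ K)
    -- counterfactual indicators Y^a_k, D^a_k under the intervention do(A = a)
    (Ycf Dcf : ℕ → ℕ → Ω → ℕ)
    (hYcfm : ∀ a k, Measurable (Ycf a k)) (hDcfm : ∀ a k, Measurable (Dcf a k))
    (hYcfbin : ∀ a k ω, Ycf a k ω = 0 ∨ Ycf a k ω = 1)
    (hDcfbin : ∀ a k ω, Dcf a k ω = 0 ∨ Dcf a k ω = 1)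
    (hYcfmono : ∀ a k ω, Ycf a k ω ≤ Ycf a (k + 1) ω)
    (hDcfmono : ∀ a k ω, Dcf a k ω ≤ Dcf a (k + 1) ω)
    (hcfexcl : ∀ a k ω, Ycf a k ω * Dcf a k ω = 0)
    -- Assumption 1 (i): exchangeability — the family (Y^a_1, D^a_1, …, Y^a_K, D^a_K)
    -- is conditionally independent of A given X (stated through the atoms of the
    -- discrete counterfactual family)
    (hexch : ∀ a a' x, (a = 0 ∨ a = 1) → (a' = 0 ∨ a' = 1) →
      μ {ω | X ω = x} ≠ 0 → μ ({ω | X ω = x} ∩ {ω | A ω = a'}) ≠ 0 →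
      ∀ f g : ℕ → ℕ,
        μ[|{ω | X ω = x} ∩ {ω | A ω = a'}]
            {ω | ∀ j, 1 ≤ j → j ≤ K → (Ycf a j ω = f j ∧ Dcf a j ω = g j)}
          = μ[|{ω | X ω = x}]
              {ω | ∀ j, 1 ≤ j → j ≤ K → (Ycf a j ω = f j ∧ Dcf a j ω = g j)})
    -- Assumption 1 (ii): positivity
    (hposA : ∀ x, μ {ω | X ω = x} ≠ 0 → ∀ a', (a' = 0 ∨ a' = 1) →
      μ ({ω | X ω = x} ∩ {ω | A ω = a'}) ≠ 0)
    -- Assumption 1 (iii): consistency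
    (hconsY : ∀ k ω, Y k ω = A ω * Ycf 1 k ω + (1 - A ω) * Ycf 0 k ω)
    (hconsD : ∀ k ω, D k ω = A ω * Dcf 1 k ω + (1 - A ω) * Dcf 0 k ω)
    -- counterfactual indicators Y^{a,d̄=0}_k under the joint intervention
    -- do(A = a, D̄_K = 0) eliminating the competing event
    (Ycf0 : ℕ → ℕ → Ω → ℕ)
    (hYcf0m : ∀ a k, Measurable (Ycf0 a k))
    (hYcf0bin : ∀ a k ω, Ycf0 a k ω = 0 ∨ Ycf0 a k ω = 1)
    (hYcf0mono : ∀ a k ω, Ycf0 a k ω ≤ Ycf0 a (k + 1) ω)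
    -- (Y^{a,d̄=0}_1, …, Y^{a,d̄=0}_K) is conditionally independent of A given X
    -- (stated through the atoms of the discrete counterfactual family)
    (hexch0 : ∀ a a' x, (a = 0 ∨ a = 1) → (a' = 0 ∨ a' = 1) →
      μ {ω | X ω = x} ≠ 0 → μ ({ω | X ω = x} ∩ {ω | A ω = a'}) ≠ 0 →
      ∀ f : ℕ → ℕ,
        μ[|{ω | X ω = x} ∩ {ω | A ω = a'}]
            {ω | ∀ j, 1 ≤ j → j ≤ K → Ycf0 a j ω = f j}
          = μ[|{ω | X ω = x}] {ω | ∀ j, 1 ≤ j → j ≤ K → Ycf0 a j ω = f j})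
    -- Assumption 2 (i): sequential exchangeability — (Y^{a,d̄=0}_k, …, Y^{a,d̄=0}_K)
    -- is conditionally independent of D_k given X = x, A = a, Ȳ_{k−1} = D̄_{k−1} = 0
    (hseqexch : ∀ a x k, (a = 0 ∨ a = 1) → 1 ≤ k → k ≤ K →
      μ ({ω | X ω = x} ∩ {ω | A ω = a} ∩ allZero Y (k - 1) ∩ allZero D (k - 1)) ≠ 0 →
      μ ({ω | X ω = x} ∩ {ω | A ω = a} ∩ allZero Y (k - 1) ∩ allZero D (k - 1)
          ∩ {ω | D k ω = 0}) ≠ 0 →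
      ∀ f : ℕ → ℕ,
        μ[|{ω | X ω = x} ∩ {ω | A ω = a} ∩ allZero Y (k - 1) ∩ allZero D (k - 1)
            ∩ {ω | D k ω = 0}]
            {ω | ∀ l, k ≤ l → l ≤ K → Ycf0 a l ω = f l}
          = μ[|{ω | X ω = x} ∩ {ω | A ω = a} ∩ allZero Y (k - 1) ∩ allZero D (k - 1)]
              {ω | ∀ l, k ≤ l → l ≤ K → Ycf0 a l ω = f l})
    -- Assumption 2 (ii): positivity w.r.t. the competing event
    (hposDcomp : ∀ a x k, (a = 0 ∨ a = 1) → 1 ≤ k → k ≤ K →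
      μ ({ω | X ω = x} ∩ {ω | A ω = a} ∩ allZero Y (k - 1) ∩ allZero D (k - 1)) ≠ 0 →
      μ ({ω | X ω = x} ∩ {ω | A ω = a} ∩ allZero Y (k - 1) ∩ allZero D (k - 1)
          ∩ {ω | D k ω = 0}) ≠ 0)
    -- Assumption 2 (iii): consistency w.r.t. elimination of the competing event:
    -- on the event {A = a, D̄_k = 0} one has Ȳ_k = Ȳ^{a,d̄=0}_k
    (hcons0 : ∀ a ω k, (a = 0 ∨ a = 1) → k ≤ K → A ω = a →
      (∀ l, 1 ≤ l → l ≤ k → D l ω = 0) →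
      ∀ l, 1 ≤ l → l ≤ k → Y l ω = Ycf0 a l ω)
    (k : ℕ) (hk1 : 1 ≤ k) (hkK : k ≤ K)
    (x : 𝓧) (a : ℕ) (ha : a = 0 ∨ a = 1)
    -- positivity of all conditioning events appearing in the statement
    (hposX : μ {ω | X ω = x} ≠ 0)
    (hposY : ∀ l, 1 ≤ l → l ≤ K → μ (atRiskY Y D X A l x a) ≠ 0)
    (hposD : ∀ l, 1 ≤ l → l ≤ K → μ (atRiskD Y D X A l x a) ≠ 0)
    (hposInt : μ (allZero (Ycf0 a) (k - 1)) ≠ 0) :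
    μ[|allZero (Ycf0 a) (k - 1)] {ω | X ω = x}
      = (μ {ω | X ω = x} * ∏ l ∈ Icc 1 (k - 1), (1 - hazY μ Y D X A l x a))
          / μ (allZero (Ycf0 a) (k - 1)) := by
  classical
  have hXx : MeasurableSet {ω | X ω = x} := hXm (measurableSet_singleton x)
  have hμX_top : μ {ω | X ω = x} ≠ ⊤ := measure_ne_top μ _
  rcases Nat.lt_or_ge k 2 with hk2 | hk2
  · -- trivial case k = 1
    have hk : k = 1 := by omega
    subst hk
    simp only [Nat.sub_self, allZero_zero, ProbabilityTheory.cond_univ, measure_univ,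
      Finset.Icc_eq_empty_of_lt (by omega : (0 : ℕ) < 1), Finset.prod_empty, mul_one,
      div_one]
  · -- main case 2 ≤ k
    set n := k - 1 with hn
    have hn1 : 1 ≤ n := by omega
    have hnK : n ≤ K := by omega
    have hmono : ∀ ω, Monotone fun l => Ycf0 a l ω :=
      fun ω => monotone_nat_of_le_succ fun l => hYcf0mono a l ω
    set S : Set Ω := {ω | Ycf0 a n ω = 0} with hSdef
    have hSz : allZero (Ycf0 a) n = S := by
      ext ω
      constructor
      · intro h; exact h n hn1 le_rfl
      · intro h l h1 hl
        have h2 : Ycf0 a l ω ≤ Ycf0 a n ω := hmono ω hl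
        simp only [hSdef, Set.mem_setOf_eq] at h
        omega
    have hSmeas : MeasurableSet S := hYcf0m a n (measurableSet_singleton 0)
    set B : ℕ → Set Ω := fun j =>
      {ω | X ω = x} ∩ {ω | A ω = a} ∩ allZero Y j ∩ allZero D j with hBdef
    set C : ℕ → Set Ω := fun j => B j ∩ {ω | D (j + 1) ω = 0} with hCdef
    have hYzm : ∀ j, MeasurableSet (allZero Y j) := measurableSet_allZero hYm
    have hDzm : ∀ j, MeasurableSet (allZero D j) := measurableSet_allZero hDm
    have hAa : MeasurableSet {ω | A ω = a} := hAm (measurableSet_singleton a)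
    have hBmeas : ∀ j, MeasurableSet (B j) := fun j =>
      ((hXx.inter hAa).inter (hYzm j)).inter (hDzm j)
    have hCmeas : ∀ j, MeasurableSet (C j) := fun j =>
      (hBmeas j).inter (hDm (j + 1) (measurableSet_singleton 0))
    have hBeq : ∀ j, B j = atRiskD Y D X A (j + 1) x a := by
      intro j
      ext ω
      simp only [hBdef, atRiskD, Nat.add_sub_cancel, Set.mem_inter_iff]
      tauto
    have hCeq : ∀ j, C j = atRiskY Y D X A (j + 1) x a := by
      intro j
      ext ω
      simp only [hCdef, hBdef, atRiskY, Nat.add_sub_cancel, allZero_succ,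
        Set.mem_inter_iff, Set.mem_setOf_eq]
      tauto
    have hBpos : ∀ j, j ≤ n → μ (B j) ≠ 0 := fun j hj => by
      rw [hBeq j]; exact hposD (j + 1) (by omega) (by omega)
    have hCpos : ∀ j, j + 1 ≤ n → μ (C j) ≠ 0 := fun j hj => by
      rw [hCeq j]; exact hposY (j + 1) (by omega) (by omega)
    -- Step 1: sequential exchangeability
    have step1 : ∀ j, j + 1 ≤ n → μ[|C j] S = μ[|B j] S := by
      intro j hj
      refine measure_eq_of_atoms _ _ (Ycf0 a) (hYcf0m a) (hYcf0bin a) (j + 1) K n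
        (by omega) hnK ?_
      intro f
      have h := hseqexch a x (j + 1) ha (by omega) (by omega)
        (by simpa only [Nat.add_sub_cancel] using hBpos j (by omega))
        (by simpa only [Nat.add_sub_cancel] using hCpos j hj) f
      simp only [Nat.add_sub_cancel] at h
      simpa only [hCdef, hBdef] using h
    -- set identities for the consistency step
    have hBC : ∀ j, B (j + 1) = C j ∩ {ω | Y (j + 1) ω = 0} := by
      intro j
      ext ω
      simp only [hCdef, hBdef, Set.mem_inter_iff, Set.mem_setOf_eq, allZero_succ]
      tauto
    have hCS : ∀ j, j + 1 ≤ n → C j ∩ S = B (j + 1) ∩ S := by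
      intro j hj
      rw [hBC j]
      ext ω
      simp only [Set.mem_inter_iff, Set.mem_setOf_eq]
      constructor
      · rintro ⟨hC, hSω⟩
        refine ⟨⟨hC, ?_⟩, hSω⟩
        have hC' := hC
        simp only [hCdef, hBdef, Set.mem_inter_iff, Set.mem_setOf_eq] at hC'
        obtain ⟨⟨⟨⟨hx1, hA1⟩, hYz1⟩, hDz1⟩, hD1⟩ := hC'
        have hDbar : ∀ l, 1 ≤ l → l ≤ j + 1 → D l ω = 0 := by
          intro l hl1 hl2
          rcases Nat.lt_or_ge l (j + 1) with hc | hc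
          · exact hDz1 l hl1 (by omega)
          · have : l = j + 1 := by omega
            subst this; exact hD1
        have hcons := hcons0 a ω (j + 1) ha (by omega) hA1 hDbar (j + 1) (by omega) le_rfl
        have hle : Ycf0 a (j + 1) ω ≤ Ycf0 a n ω := hmono ω hj
        simp only [hSdef, Set.mem_setOf_eq] at hSω
        omega
      · rintro ⟨⟨hC, _⟩, hSω⟩
        exact ⟨hC, hSω⟩
    -- Step 2: peel off one hazard factor
    have step2 : ∀ j, j + 1 ≤ n →
        μ[|C j] S = (1 - hazY μ Y D X A (j + 1) x a) * μ[|B (j + 1)] S := by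
      intro j hj
      have hCne := hCpos j hj
      have hBne := hBpos (j + 1) hj
      have h1 : μ[|C j] S = (μ (C j))⁻¹ * μ (C j ∩ S) :=
        ProbabilityTheory.cond_apply (hCmeas j) μ S
      have h3 : μ (B (j + 1) ∩ S) = μ (B (j + 1)) * μ[|B (j + 1)] S := by
        rw [ProbabilityTheory.cond_apply (hBmeas (j + 1)) μ S, ← mul_assoc,
          ENNReal.mul_inv_cancel hBne (measure_ne_top μ _), one_mul]
      have h4 : (1 : ℝ≥0∞) - hazY μ Y D X A (j + 1) x a = (μ (C j))⁻¹ * μ (B (j + 1)) := by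
        have hprob : IsProbabilityMeasure (μ[|C j]) :=
          ProbabilityTheory.cond_isProbabilityMeasure hCne
        have hY0 : {ω | Y (j + 1) ω = 0} = {ω | Y (j + 1) ω = 1}ᶜ := by
          ext ω
          rcases hYbin (j + 1) ω with h | h <;> simp [h]
        have h5 : hazY μ Y D X A (j + 1) x a = μ[|C j] {ω | Y (j + 1) ω = 1} := by
          rw [hazY, ← hCeq j]
        rw [h5, ← MeasureTheory.prob_compl_eq_one_sub
          (show MeasurableSet {ω | Y (j + 1) ω = 1} from
            hYm (j + 1) (measurableSet_singleton 1)), ← hY0,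
          ProbabilityTheory.cond_apply (hCmeas j) μ, ← hBC j]
      rw [h1, hCS j hj, h3, h4]
      ring
    -- base case
    have base : μ[|B n] S = 1 := by
      have hsub : B n ⊆ S := by
        intro ω hω
        have hω' := hω
        simp only [hBdef, Set.mem_inter_iff, Set.mem_setOf_eq] at hω'
        obtain ⟨⟨⟨hx1, hA1⟩, hYz1⟩, hDz1⟩ := hω'
        have hcons := hcons0 a ω n ha hnK hA1 hDz1 n hn1 le_rfl
        simp only [hSdef, Set.mem_setOf_eq]
        rw [← hcons]
        exact hYz1 n hn1 le_rfl
      rw [ProbabilityTheory.cond_apply (hBmeas n) μ S, Set.inter_eq_left.mpr hsub]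
      exact ENNReal.inv_mul_cancel (hBpos n le_rfl) (measure_ne_top μ _)
    -- downward induction
    have key : ∀ d, d ≤ n → μ[|B (n - d)] S
        = ∏ l ∈ Finset.Icc (n - d + 1) n, (1 - hazY μ Y D X A l x a) := by
      intro d
      induction d with
      | zero =>
        intro _
        simpa [Finset.Icc_eq_empty_of_lt (by omega : n < n - 0 + 1)] using base
      | succ d ih =>
        intro hd
        have hdn : d ≤ n := by omega
        have hj1 : (n - (d + 1)) + 1 = n - d := by omega
        have hj1n : (n - (d + 1)) + 1 ≤ n := by omega
        calc μ[|B (n - (d + 1))] S = μ[|C (n - (d + 1))] S := (step1 _ hj1n).symm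
          _ = (1 - hazY μ Y D X A ((n - (d + 1)) + 1) x a) * μ[|B ((n - (d + 1)) + 1)] S :=
              step2 _ hj1n
          _ = (1 - hazY μ Y D X A ((n - (d + 1)) + 1) x a)
                * ∏ l ∈ Finset.Icc (n - d + 1) n, (1 - hazY μ Y D X A l x a) := by
              rw [hj1, ih hdn]
          _ = ∏ l ∈ Finset.Icc ((n - (d + 1)) + 1) n, (1 - hazY μ Y D X A l x a) := by
              have hins : Finset.Icc ((n - (d + 1)) + 1) n
                  = insert ((n - (d + 1)) + 1) (Finset.Icc (n - d + 1) n) := by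
                ext l
                simp only [Finset.mem_Icc, Finset.mem_insert]
                omega
              rw [hins, Finset.prod_insert (by simp only [Finset.mem_Icc]; omega)]
    -- conclusion of the induction at j = 0
    have hB0 : B 0 = {ω | X ω = x} ∩ {ω | A ω = a} := by
      simp [hBdef, allZero_zero]
    have hkey0 : μ[|({ω | X ω = x} ∩ {ω | A ω = a})] S
        = ∏ l ∈ Finset.Icc 1 n, (1 - hazY μ Y D X A l x a) := by
      have h := key n le_rfl
      rw [Nat.sub_self, hB0] at h
      simpa using h
    -- Step 3: exchangeability w.r.t. treatment
    have hXA : μ ({ω | X ω = x} ∩ {ω | A ω = a}) ≠ 0 := hposA x hposX a ha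
    have step3 : μ[|{ω | X ω = x}] S = ∏ l ∈ Finset.Icc 1 n, (1 - hazY μ Y D X A l x a) := by
      have h := measure_eq_of_atoms (μ[|({ω | X ω = x} ∩ {ω | A ω = a})]) (μ[|{ω | X ω = x}])
        (Ycf0 a) (hYcf0m a) (hYcf0bin a) 1 K n hn1 hnK (hexch0 a a x ha ha hposX hXA)
      calc μ[|{ω | X ω = x}] S = μ[|({ω | X ω = x} ∩ {ω | A ω = a})] S := h.symm
        _ = _ := hkey0
    -- final assembly
    rw [hSz] at hposInt ⊢
    have hXS : μ (S ∩ {ω | X ω = x})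
        = μ {ω | X ω = x} * ∏ l ∈ Finset.Icc 1 n, (1 - hazY μ Y D X A l x a) := by
      have h := step3
      rw [ProbabilityTheory.cond_apply hXx μ S] at h
      calc μ (S ∩ {ω | X ω = x}) = μ ({ω | X ω = x} ∩ S) := by rw [Set.inter_comm]
        _ = μ {ω | X ω = x} * ((μ {ω | X ω = x})⁻¹ * μ ({ω | X ω = x} ∩ S)) := by
            rw [← mul_assoc, ENNReal.mul_inv_cancel hposX hμX_top, one_mul]
        _ = _ := by rw [h]
    rw [ProbabilityTheory.cond_apply hSmeas μ, hXS, div_eq_mul_inv]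
    ring

end Stmt7
end
end

section
/- Identification of the interventional at-risk covariate distribution for separable effects: under the separable-effects assumptions (exchangeability, positivity, consistency, and the dismissible components conditions), for every k ∈ {1,…,K}, every x with P(X = x) > 0 and every a_Y, a_D ∈ {0,1}, P(X = x, D̄^{a_Y,a_D}_k = 0, Ȳ^{a_Y,a_D}_{k−1} = 0) = P(X = x)·(1 − h_D(k,x,a_D))·Π_{l=1}^{k−1} (1 − h_D(l,x,a_D))·(1 − h_Y(l,x,a_Y)). -/
/-!
STATEMENT 9: Identification of the interventional at-risk covariate distribution
for separable effects. Under the separable-effects assumptions (exchangeability,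
positivity, consistency, and the dismissible components conditions), for every
`k ∈ {1,…,K}`, every `x` with `P(X = x) > 0` and every `a_Y, a_D ∈ {0,1}`,
`P(X = x, D̄^{a_Y,a_D}_k = 0, Ȳ^{a_Y,a_D}_{k−1} = 0)
  = P(X = x)·(1 − h_D(k,x,a_D))·Π_{l=1}^{k−1} (1 − h_D(l,x,a_D))·(1 − h_Y(l,x,a_Y))`.
-/

open MeasureTheory ProbabilityTheory Finset
open scoped ENNReal

noncomputable section

set_option linter.unusedSectionVars false
set_option linter.unusedVariables false
set_option maxHeartbeats 1000000

namespace Stmt9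

variable {Ω 𝓧 : Type*} [MeasurableSpace Ω] [MeasurableSpace 𝓧] [MeasurableSingletonClass 𝓧]

/-- The event that the history `V̄_k = (V_1, …, V_k)` is identically zero; for `k = 0`
this is all of `Ω` (the convention `V̄_0 = 0`). -/
def allZero (V : ℕ → Ω → ℕ) (k : ℕ) : Set Ω :=
  {ω | ∀ l, 1 ≤ l → l ≤ k → V l ω = 0}

/-- Conditioning event of the main-event hazard `h_Y(k,x,a)`:
`{D̄_k = 0, Ȳ_{k−1} = 0, X = x, A = a}` (the competing event is resolved before the
main event within each interval). -/
def atRiskY (Y D : ℕ → Ω → ℕ) (X : Ω → 𝓧) (A : Ω → ℕ) (k : ℕ) (x : 𝓧) (a : ℕ) : Set Ω :=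
  allZero D k ∩ allZero Y (k - 1) ∩ {ω | X ω = x} ∩ {ω | A ω = a}

/-- Conditioning event of the competing-event hazard `h_D(k,x,a)`:
`{D̄_{k−1} = 0, Ȳ_{k−1} = 0, X = x, A = a}`. -/
def atRiskD (Y D : ℕ → Ω → ℕ) (X : Ω → 𝓧) (A : Ω → ℕ) (k : ℕ) (x : 𝓧) (a : ℕ) : Set Ω :=
  allZero D (k - 1) ∩ allZero Y (k - 1) ∩ {ω | X ω = x} ∩ {ω | A ω = a}

/-- Conditional hazard of the main event,
`h_Y(k,x,a) = P(Y_k = 1 | D̄_k = 0, Ȳ_{k−1} = 0, X = x, A = a)`. -/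
def hazY (μ : Measure Ω) (Y D : ℕ → Ω → ℕ) (X : Ω → 𝓧) (A : Ω → ℕ)
    (k : ℕ) (x : 𝓧) (a : ℕ) : ℝ≥0∞ :=
  μ[|atRiskY Y D X A k x a] {ω | Y k ω = 1}

/-- Conditional hazard of the competing event,
`h_D(k,x,a) = P(D_k = 1 | D̄_{k−1} = 0, Ȳ_{k−1} = 0, X = x, A = a)`. -/
def hazD (μ : Measure Ω) (Y D : ℕ → Ω → ℕ) (X : Ω → 𝓧) (A : Ω → ℕ)
    (k : ℕ) (x : 𝓧) (a : ℕ) : ℝ≥0∞ :=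
  μ[|atRiskD Y D X A k x a] {ω | D k ω = 1}

/-! ### Auxiliary lemmas -/


lemma allZero_zero (V : ℕ → Ω → ℕ) : allZero V 0 = Set.univ := by
  ext ω; simp only [allZero, Set.mem_setOf_eq, Set.mem_univ, iff_true]
  intro l h1 h2; omega

lemma allZero_succ (V : ℕ → Ω → ℕ) (k : ℕ) :
    allZero V (k + 1) = allZero V k ∩ {ω | V (k + 1) ω = 0} := by
  ext ω
  constructor
  · intro h; exact ⟨fun l h1 h2 => h l h1 (by omega), h (k + 1) (by omega) le_rfl⟩
  · rintro ⟨h, hk⟩ l h1 h2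
    rcases eq_or_lt_of_le h2 with rfl | h2'
    · exact hk
    · exact h l h1 (by omega)

lemma measurableSet_allZero {V : ℕ → Ω → ℕ} (hV : ∀ l, Measurable (V l)) (k : ℕ) :
    MeasurableSet (allZero V k) := by
  have h : allZero V k = ⋂ l, ⋂ (_ : 1 ≤ l), ⋂ (_ : l ≤ k), {ω | V l ω = 0} := by
    ext ω; simp [allZero]
  rw [h]
  exact MeasurableSet.iInter fun l => MeasurableSet.iInter fun _ =>
    MeasurableSet.iInter fun _ => (hV l) (measurableSet_singleton 0)

lemma inter_zero_eq (μ : Measure Ω) [IsProbabilityMeasure μ]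
    (C : Set Ω) (hCm : MeasurableSet C) (hC0 : μ C ≠ 0)
    (V : Ω → ℕ) (hV : Measurable V) (hbin : ∀ ω, V ω = 0 ∨ V ω = 1) :
    μ (C ∩ {ω | V ω = 0}) = μ C * (1 - μ[|C] {ω | V ω = 1}) := by
  have hCt : μ C ≠ ⊤ := measure_ne_top μ C
  have hcup : C = (C ∩ {ω | V ω = 0}) ∪ (C ∩ {ω | V ω = 1}) := by
    ext ω
    constructor
    · intro h; rcases hbin ω with h0 | h1
      · exact Or.inl ⟨h, h0⟩
      · exact Or.inr ⟨h, h1⟩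
    · rintro (⟨h, _⟩ | ⟨h, _⟩) <;> exact h
  have hdis : Disjoint (C ∩ {ω | V ω = 0}) (C ∩ {ω | V ω = 1}) := by
    rw [Set.disjoint_iff]
    rintro ω ⟨⟨_, h0⟩, ⟨_, h1⟩⟩
    simp only [Set.mem_setOf_eq] at h0 h1
    omega
  have hsplit : μ C = μ (C ∩ {ω | V ω = 0}) + μ (C ∩ {ω | V ω = 1}) := by
    conv_lhs => rw [hcup]
    exact measure_union hdis (hCm.inter (hV (measurableSet_singleton 1)))
  have hb_t : μ (C ∩ {ω | V ω = 1}) ≠ ⊤ := measure_ne_top _ _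
  rw [cond_apply hCm]
  rw [ENNReal.mul_sub (fun _ _ => hCt), mul_one, ← mul_assoc,
    ENNReal.mul_inv_cancel hC0 hCt, one_mul]
  conv_lhs => rw [show μ (C ∩ {ω | V ω = 0}) =
    μ (C ∩ {ω | V ω = 0}) + μ (C ∩ {ω | V ω = 1}) - μ (C ∩ {ω | V ω = 1}) from
    (ENNReal.add_sub_cancel_right hb_t).symm]
  rw [← hsplit]

lemma exch_measure (μ : Measure Ω) [IsProbabilityMeasure μ]
    (K : ℕ) (Ys Ds : ℕ → Ω → ℕ)
    (hYsm : ∀ k, Measurable (Ys k)) (hDsm : ∀ k, Measurable (Ds k))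
    (hYsbin : ∀ k ω, Ys k ω = 0 ∨ Ys k ω = 1) (hDsbin : ∀ k ω, Ds k ω = 0 ∨ Ds k ω = 1)
    (Cx CA : Set Ω) (hCxm : MeasurableSet Cx) (hCAm : MeasurableSet (Cx ∩ CA))
    (hCx0 : μ Cx ≠ 0) (hCA0 : μ (Cx ∩ CA) ≠ 0)
    (hexch : ∀ f g : ℕ → ℕ,
      μ[|Cx ∩ CA] {ω | ∀ j, 1 ≤ j → j ≤ K → (Ys j ω = f j ∧ Ds j ω = g j)}
        = μ[|Cx] {ω | ∀ j, 1 ≤ j → j ≤ K → (Ys j ω = f j ∧ Ds j ω = g j)})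
    (B : Set Ω)
    (hB : ∀ ω ω', (∀ j, 1 ≤ j → j ≤ K → Ys j ω = Ys j ω' ∧ Ds j ω = Ds j ω') →
      ω ∈ B → ω' ∈ B) :
    μ (Cx ∩ CA ∩ B) = μ (Cx ∩ CA) * (μ Cx)⁻¹ * μ (Cx ∩ B) := by
  classical
  set atom : Finset ℕ × Finset ℕ → Set Ω := fun p =>
    {ω | ∀ j, 1 ≤ j → j ≤ K →
      (Ys j ω = (if j ∈ p.1 then 1 else 0) ∧ Ds j ω = (if j ∈ p.2 then 1 else 0))} with hatom
  set sig : Ω → Finset ℕ × Finset ℕ := fun ω =>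
    ((Icc 1 K).filter (fun j => Ys j ω = 1), (Icc 1 K).filter (fun j => Ds j ω = 1)) with hsig
  have hmem : ∀ ω, ω ∈ atom (sig ω) := by
    intro ω j h1 h2
    constructor
    · by_cases h : Ys j ω = 1
      · simp [hsig, mem_filter, mem_Icc, h1, h2, h]
      · have h0 : Ys j ω = 0 := (hYsbin j ω).resolve_right h
        simp [hsig, mem_filter, mem_Icc, h1, h2, h, h0]
    · by_cases h : Ds j ω = 1
      · simp [hsig, mem_filter, mem_Icc, h1, h2, h]
      · have h0 : Ds j ω = 0 := (hDsbin j ω).resolve_right h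
        simp [hsig, mem_filter, mem_Icc, h1, h2, h, h0]
  have hatom_meas : ∀ p, MeasurableSet (atom p) := by
    intro p
    have h : atom p = ⋂ j, ⋂ (_ : 1 ≤ j), ⋂ (_ : j ≤ K),
        ({ω | Ys j ω = (if j ∈ p.1 then 1 else 0)} ∩
          {ω | Ds j ω = (if j ∈ p.2 then 1 else 0)}) := by
      ext ω; simp [hatom, Set.mem_setOf_eq]
    rw [h]
    exact MeasurableSet.iInter fun j => MeasurableSet.iInter fun _ =>
      MeasurableSet.iInter fun _ =>
        ((hYsm j) (measurableSet_singleton _)).inter ((hDsm j) (measurableSet_singleton _))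
  have hagree : ∀ p ω ω', ω ∈ atom p → ω' ∈ atom p →
      ∀ j, 1 ≤ j → j ≤ K → Ys j ω = Ys j ω' ∧ Ds j ω = Ds j ω' := by
    intro p ω ω' hω hω' j h1 h2
    exact ⟨(hω j h1 h2).1.trans (hω' j h1 h2).1.symm,
      (hω j h1 h2).2.trans (hω' j h1 h2).2.symm⟩
  set P : Finset (Finset ℕ × Finset ℕ) :=
    ((Icc 1 K).powerset ×ˢ (Icc 1 K).powerset).filter (fun p => ∃ ω ∈ B, sig ω = p) with hP
  have hsig_mem : ∀ ω, sig ω ∈ (Icc 1 K).powerset ×ˢ (Icc 1 K).powerset := by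
    intro ω
    simp only [mem_product, mem_powerset, hsig]
    exact ⟨filter_subset _ _, filter_subset _ _⟩
  have hBeq : B = ⋃ p ∈ P, atom p := by
    ext ω
    constructor
    · intro hω
      have hpP : sig ω ∈ P := Finset.mem_filter.2 ⟨hsig_mem ω, ω, hω, rfl⟩
      exact Set.mem_biUnion hpP (hmem ω)
    · intro hω
      obtain ⟨p, hp, hωp⟩ := Set.mem_iUnion₂.1 hω
      obtain ⟨-, ω', hω'B, hω'sig⟩ := Finset.mem_filter.1 hp
      have hω' : ω' ∈ atom p := hω'sig ▸ hmem ω'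
      exact hB ω' ω (hagree p ω' ω hω' hωp) hω'B
  have hdisj : (↑P : Set (Finset ℕ × Finset ℕ)).PairwiseDisjoint atom := by
    intro p hp q hq hpq
    rw [hP] at hp hq
    simp only [coe_filter, Set.mem_setOf_eq, mem_filter, mem_product, mem_powerset] at hp hq
    refine Set.disjoint_left.2 fun ω hωp hωq => hpq ?_
    have hp1 : p.1 ⊆ Icc 1 K := hp.1.1
    have hq1 : q.1 ⊆ Icc 1 K := hq.1.1
    have hp2 : p.2 ⊆ Icc 1 K := hp.1.2
    have hq2 : q.2 ⊆ Icc 1 K := hq.1.2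
    have h1 : p.1 = q.1 := by
      ext j
      constructor
      · intro hj
        have hjI := mem_Icc.1 (hp1 hj)
        have e1 := (hωp j hjI.1 hjI.2).1
        have e2 := (hωq j hjI.1 hjI.2).1
        rw [if_pos hj] at e1
        by_contra hjq
        rw [if_neg hjq] at e2
        omega
      · intro hj
        have hjI := mem_Icc.1 (hq1 hj)
        have e1 := (hωp j hjI.1 hjI.2).1
        have e2 := (hωq j hjI.1 hjI.2).1
        rw [if_pos hj] at e2
        by_contra hjp
        rw [if_neg hjp] at e1
        omega
    have h2 : p.2 = q.2 := by
      ext j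
      constructor
      · intro hj
        have hjI := mem_Icc.1 (hp2 hj)
        have e1 := (hωp j hjI.1 hjI.2).2
        have e2 := (hωq j hjI.1 hjI.2).2
        rw [if_pos hj] at e1
        by_contra hjq
        rw [if_neg hjq] at e2
        omega
      · intro hj
        have hjI := mem_Icc.1 (hq2 hj)
        have e1 := (hωp j hjI.1 hjI.2).2
        have e2 := (hωq j hjI.1 hjI.2).2
        rw [if_pos hj] at e2
        by_contra hjp
        rw [if_neg hjp] at e1
        omega
    exact Prod.ext h1 h2
  have hatom_id : ∀ p, μ (Cx ∩ CA ∩ atom p)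
      = μ (Cx ∩ CA) * ((μ Cx)⁻¹ * μ (Cx ∩ atom p)) := by
    intro p
    have he := hexch (fun j => if j ∈ p.1 then 1 else 0) (fun j => if j ∈ p.2 then 1 else 0)
    beta_reduce at he
    rw [cond_apply hCAm, cond_apply hCxm] at he
    rw [show atom p = {ω | ∀ j, 1 ≤ j → j ≤ K →
        ((Ys j ω = if j ∈ p.1 then 1 else 0) ∧ (Ds j ω = if j ∈ p.2 then 1 else 0))} from
        hatom ▸ rfl]
    rw [← he, ← mul_assoc, ENNReal.mul_inv_cancel hCA0 (measure_ne_top _ _), one_mul]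
  have hsum1 : μ (Cx ∩ CA ∩ B) = ∑ p ∈ P, μ (Cx ∩ CA ∩ atom p) := by
    have h : Cx ∩ CA ∩ B = ⋃ p ∈ P, (Cx ∩ CA ∩ atom p) := by
      rw [hBeq, Set.inter_iUnion₂]
    rw [h]
    exact measure_biUnion_finset
      (hdisj.mono_on fun p _ => Set.inter_subset_right)
      (fun p _ => hCAm.inter (hatom_meas p))
  have hsum2 : μ (Cx ∩ B) = ∑ p ∈ P, μ (Cx ∩ atom p) := by
    have h : Cx ∩ B = ⋃ p ∈ P, (Cx ∩ atom p) := by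
      rw [hBeq, Set.inter_iUnion₂]
    rw [h]
    exact measure_biUnion_finset
      (hdisj.mono_on fun p _ => Set.inter_subset_right)
      (fun p _ => hCxm.inter (hatom_meas p))
  rw [hsum1, hsum2, Finset.mul_sum]
  refine Finset.sum_congr rfl fun p _ => ?_
  rw [hatom_id p, mul_assoc]

lemma cond_transfer (μ : Measure Ω) [IsProbabilityMeasure μ]
    (K : ℕ) (Ys Ds : ℕ → Ω → ℕ)
    (hYsm : ∀ k, Measurable (Ys k)) (hDsm : ∀ k, Measurable (Ds k))
    (hYsbin : ∀ k ω, Ys k ω = 0 ∨ Ys k ω = 1) (hDsbin : ∀ k ω, Ds k ω = 0 ∨ Ds k ω = 1)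
    (Cx CA : Set Ω) (hCxm : MeasurableSet Cx) (hCAm : MeasurableSet CA)
    (hCx0 : μ Cx ≠ 0) (hCA0 : μ (Cx ∩ CA) ≠ 0)
    (hexch : ∀ f g : ℕ → ℕ,
      μ[|Cx ∩ CA] {ω | ∀ j, 1 ≤ j → j ≤ K → (Ys j ω = f j ∧ Ds j ω = g j)}
        = μ[|Cx] {ω | ∀ j, 1 ≤ j → j ≤ K → (Ys j ω = f j ∧ Ds j ω = g j)})
    (E T : Set Ω) (hEm : MeasurableSet E)
    (hEB : ∀ ω ω', (∀ j, 1 ≤ j → j ≤ K → Ys j ω = Ys j ω' ∧ Ds j ω = Ds j ω') →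
      ω ∈ E → ω' ∈ E)
    (hETB : ∀ ω ω', (∀ j, 1 ≤ j → j ≤ K → Ys j ω = Ys j ω' ∧ Ds j ω = Ds j ω') →
      ω ∈ E ∩ T → ω' ∈ E ∩ T) :
    μ[|E ∩ Cx] T = μ[|E ∩ Cx ∩ CA] T := by
  set r := μ (Cx ∩ CA) * (μ Cx)⁻¹ with hr
  have hr0 : r ≠ 0 := by
    apply mul_ne_zero hCA0
    exact ENNReal.inv_ne_zero.2 (measure_ne_top μ Cx)
  have hrt : r ≠ ⊤ :=
    ENNReal.mul_ne_top (measure_ne_top μ _) (ENNReal.inv_ne_top.2 hCx0)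
  have hCACm : MeasurableSet (Cx ∩ CA) := hCxm.inter hCAm
  have e1 : μ (E ∩ Cx ∩ CA) = r * μ (E ∩ Cx) := by
    have h := exch_measure μ K Ys Ds hYsm hDsm hYsbin hDsbin Cx CA hCxm hCACm hCx0 hCA0
      hexch E hEB
    have h1 : Cx ∩ CA ∩ E = E ∩ Cx ∩ CA := by
      ext ω; simp only [Set.mem_inter_iff]; tauto
    have h2 : Cx ∩ E = E ∩ Cx := Set.inter_comm _ _
    rw [h1, h2] at h
    exact h
  have e2 : μ (E ∩ Cx ∩ CA ∩ T) = r * μ (E ∩ Cx ∩ T) := by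
    have h := exch_measure μ K Ys Ds hYsm hDsm hYsbin hDsbin Cx CA hCxm hCACm hCx0 hCA0
      hexch (E ∩ T) hETB
    have h1 : Cx ∩ CA ∩ (E ∩ T) = E ∩ Cx ∩ CA ∩ T := by
      ext ω; simp only [Set.mem_inter_iff]; tauto
    have h2 : Cx ∩ (E ∩ T) = E ∩ Cx ∩ T := by
      ext ω; simp only [Set.mem_inter_iff]; tauto
    rw [h1, h2] at h
    exact h
  rw [cond_apply (hEm.inter hCxm), cond_apply ((hEm.inter hCxm).inter hCAm)]
  rw [e1, e2]
  rw [ENNReal.mul_inv (Or.inl hr0) (Or.inl hrt)]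
  calc (μ (E ∩ Cx))⁻¹ * μ (E ∩ Cx ∩ T)
      = (r⁻¹ * r) * ((μ (E ∩ Cx))⁻¹ * μ (E ∩ Cx ∩ T)) := by
        rw [ENNReal.inv_mul_cancel hr0 hrt, one_mul]
    _ = r⁻¹ * (μ (E ∩ Cx))⁻¹ * (r * μ (E ∩ Cx ∩ T)) := by ring

theorem separable_effect_at_risk_identification
    (μ : Measure Ω) [IsProbabilityMeasure μ]
    (Y D : ℕ → Ω → ℕ) (X : Ω → 𝓧) (A : Ω → ℕ)
    -- measurability of the random variables
    (hXm : Measurable X) (hAm : Measurable A)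
    (hYm : ∀ k, Measurable (Y k)) (hDm : ∀ k, Measurable (D k))
    -- binary indicators, absorbing events, mutual exclusivity
    (hYbin : ∀ k ω, Y k ω = 0 ∨ Y k ω = 1) (hDbin : ∀ k ω, D k ω = 0 ∨ D k ω = 1)
    (hYmono : ∀ k ω, Y k ω ≤ Y (k + 1) ω) (hDmono : ∀ k ω, D k ω ≤ D (k + 1) ω)
    (hexcl : ∀ k ω, Y k ω * D k ω = 0)
    (hAbin : ∀ ω, A ω = 0 ∨ A ω = 1)
    (K : ℕ) (hK : 1 ≤ K)
    -- counterfactual indicators Y^{a_Y,a_D}_k, D^{a_Y,a_D}_k under the intervention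
    -- do(A_Y = a_Y, A_D = a_D) on the two treatment components
    (Ysep Dsep : ℕ → ℕ → ℕ → Ω → ℕ)
    (hYsm : ∀ aY aD k, Measurable (Ysep aY aD k))
    (hDsm : ∀ aY aD k, Measurable (Dsep aY aD k))
    (hYsbin : ∀ aY aD k ω, Ysep aY aD k ω = 0 ∨ Ysep aY aD k ω = 1)
    (hDsbin : ∀ aY aD k ω, Dsep aY aD k ω = 0 ∨ Dsep aY aD k ω = 1)
    (hYsmono : ∀ aY aD k ω, Ysep aY aD k ω ≤ Ysep aY aD (k + 1) ω)
    (hDsmono : ∀ aY aD k ω, Dsep aY aD k ω ≤ Dsep aY aD (k + 1) ω)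
    (hsexcl : ∀ aY aD k ω, Ysep aY aD k ω * Dsep aY aD k ω = 0)
    -- (i) exchangeability: the family (Y^{a_Y,a_D}_k, D^{a_Y,a_D}_k)_{k ≤ K} is
    -- conditionally independent of A given X (stated through the atoms of the
    -- discrete counterfactual family)
    (hexchS : ∀ aY aD a' x, (aY = 0 ∨ aY = 1) → (aD = 0 ∨ aD = 1) → (a' = 0 ∨ a' = 1) →
      μ {ω | X ω = x} ≠ 0 → μ ({ω | X ω = x} ∩ {ω | A ω = a'}) ≠ 0 →
      ∀ f g : ℕ → ℕ,
        μ[|{ω | X ω = x} ∩ {ω | A ω = a'}]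
            {ω | ∀ j, 1 ≤ j → j ≤ K → (Ysep aY aD j ω = f j ∧ Dsep aY aD j ω = g j)}
          = μ[|{ω | X ω = x}]
              {ω | ∀ j, 1 ≤ j → j ≤ K → (Ysep aY aD j ω = f j ∧ Dsep aY aD j ω = g j)})
    -- (ii) positivity
    (hposA : ∀ x, μ {ω | X ω = x} ≠ 0 → ∀ a', (a' = 0 ∨ a' = 1) →
      μ ({ω | X ω = x} ∩ {ω | A ω = a'}) ≠ 0)
    -- (iii) consistency: Y_k = Y^{A,A}_k and D_k = D^{A,A}_k
    (hconsS : ∀ k ω, Y k ω = Ysep (A ω) (A ω) k ω ∧ D k ω = Dsep (A ω) (A ω) k ω)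
    -- (iv) dismissible components conditions
    (hdisY : ∀ aY k x, (aY = 0 ∨ aY = 1) → 1 ≤ k → k ≤ K →
      μ[|allZero (Dsep aY 1) k ∩ allZero (Ysep aY 1) (k - 1) ∩ {ω | X ω = x}]
          {ω | Ysep aY 1 k ω = 1}
        = μ[|allZero (Dsep aY 0) k ∩ allZero (Ysep aY 0) (k - 1) ∩ {ω | X ω = x}]
            {ω | Ysep aY 0 k ω = 1})
    (hdisD : ∀ aD k x, (aD = 0 ∨ aD = 1) → 1 ≤ k → k ≤ K →
      μ[|allZero (Dsep 1 aD) (k - 1) ∩ allZero (Ysep 1 aD) (k - 1) ∩ {ω | X ω = x}]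
          {ω | Dsep 1 aD k ω = 1}
        = μ[|allZero (Dsep 0 aD) (k - 1) ∩ allZero (Ysep 0 aD) (k - 1) ∩ {ω | X ω = x}]
            {ω | Dsep 0 aD k ω = 1})
    -- positivity of all counterfactual conditioning events appearing above
    (hposSep : ∀ aY aD k x, (aY = 0 ∨ aY = 1) → (aD = 0 ∨ aD = 1) → 1 ≤ k → k ≤ K →
      μ {ω | X ω = x} ≠ 0 →
      μ (allZero (Dsep aY aD) k ∩ allZero (Ysep aY aD) (k - 1) ∩ {ω | X ω = x}) ≠ 0 ∧
        μ (allZero (Dsep aY aD) (k - 1) ∩ allZero (Ysep aY aD) (k - 1)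
            ∩ {ω | X ω = x}) ≠ 0)
    (k : ℕ) (hk1 : 1 ≤ k) (hkK : k ≤ K)
    (x : 𝓧) (hposX : μ {ω | X ω = x} ≠ 0)
    (aY aD : ℕ) (haY : aY = 0 ∨ aY = 1) (haD : aD = 0 ∨ aD = 1)
    -- positivity of the observational conditioning events of the hazards
    (hposY : ∀ l a, 1 ≤ l → l ≤ K → (a = 0 ∨ a = 1) →
      μ (atRiskY Y D X A l x a) ≠ 0)
    (hposD : ∀ l a, 1 ≤ l → l ≤ K → (a = 0 ∨ a = 1) →
      μ (atRiskD Y D X A l x a) ≠ 0) :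
    μ ({ω | X ω = x} ∩ allZero (Dsep aY aD) k ∩ allZero (Ysep aY aD) (k - 1))
      = μ {ω | X ω = x} * (1 - hazD μ Y D X A k x aD)
          * ∏ l ∈ Icc 1 (k - 1),
              (1 - hazD μ Y D X A l x aD) * (1 - hazY μ Y D X A l x aY) := by
  have hCxm : MeasurableSet {ω | X ω = x} := hXm (measurableSet_singleton x)
  have hCAm : ∀ a : ℕ, MeasurableSet {ω | A ω = a} := fun a =>
    hAm (measurableSet_singleton a)
  have hconsY : ∀ (b : ℕ) l ω, A ω = b → Y l ω = Ysep b b l ω := by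
    intro b l ω hA
    have h := (hconsS l ω).1
    rw [hA] at h
    exact h
  have hconsD : ∀ (b : ℕ) l ω, A ω = b → D l ω = Dsep b b l ω := by
    intro b l ω hA
    have h := (hconsS l ω).2
    rw [hA] at h
    exact h
  -- identification of the counterfactual hazard of Y (first at equal components)
  have hbaseY : ∀ b, (b = 0 ∨ b = 1) → ∀ n, n + 1 ≤ K →
      μ[|allZero (Dsep b b) (n + 1) ∩ allZero (Ysep b b) n ∩ {ω | X ω = x}]
        {ω | Ysep b b (n + 1) ω = 1} = hazY μ Y D X A (n + 1) x b := by
    intro b hb n hnK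
    have hEm : MeasurableSet (allZero (Dsep b b) (n + 1) ∩ allZero (Ysep b b) n) :=
      (measurableSet_allZero (hDsm b b) (n + 1)).inter (measurableSet_allZero (hYsm b b) n)
    have htrans := cond_transfer μ K (Ysep b b) (Dsep b b) (hYsm b b) (hDsm b b)
      (hYsbin b b) (hDsbin b b) {ω | X ω = x} {ω | A ω = b} hCxm (hCAm b)
      hposX (hposA x hposX b hb) (hexchS b b b x hb hb hb hposX (hposA x hposX b hb))
      (allZero (Dsep b b) (n + 1) ∩ allZero (Ysep b b) n) {ω | Ysep b b (n + 1) ω = 1}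
      hEm
      (by
        rintro ω ω' hag ⟨h1, h2⟩
        exact ⟨fun l hl1 hl2 => ((hag l hl1 (hl2.trans hnK)).2).symm.trans (h1 l hl1 hl2),
          fun l hl1 hl2 => ((hag l hl1 ((hl2.trans (Nat.le_succ n)).trans hnK)).1).symm.trans
            (h2 l hl1 hl2)⟩)
      (by
        rintro ω ω' hag ⟨⟨h1, h2⟩, h3⟩
        refine ⟨⟨fun l hl1 hl2 => ((hag l hl1 (hl2.trans hnK)).2).symm.trans (h1 l hl1 hl2),
          fun l hl1 hl2 => ((hag l hl1 ((hl2.trans (Nat.le_succ n)).trans hnK)).1).symm.trans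
            (h2 l hl1 hl2)⟩, ?_⟩
        exact ((hag (n + 1) (by omega) hnK).1).symm.trans h3)
    rw [htrans]
    -- now use consistency to replace the counterfactuals with the factuals
    have hsetC : allZero (Dsep b b) (n + 1) ∩ allZero (Ysep b b) n ∩ {ω | X ω = x}
        ∩ {ω | A ω = b} = atRiskY Y D X A (n + 1) x b := by
      ext ω
      simp only [atRiskY, allZero, Nat.add_sub_cancel, Set.mem_inter_iff, Set.mem_setOf_eq]
      constructor
      · rintro ⟨⟨⟨h1, h2⟩, h3⟩, h4⟩
        exact ⟨⟨⟨fun l a c => (hconsD b l ω h4).trans (h1 l a c),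
          fun l a c => (hconsY b l ω h4).trans (h2 l a c)⟩, h3⟩, h4⟩
      · rintro ⟨⟨⟨h1, h2⟩, h3⟩, h4⟩
        exact ⟨⟨⟨fun l a c => ((hconsD b l ω h4).symm).trans (h1 l a c),
          fun l a c => ((hconsY b l ω h4).symm).trans (h2 l a c)⟩, h3⟩, h4⟩
    have hsetT : (allZero (Dsep b b) (n + 1) ∩ allZero (Ysep b b) n ∩ {ω | X ω = x}
        ∩ {ω | A ω = b}) ∩ {ω | Ysep b b (n + 1) ω = 1}
        = atRiskY Y D X A (n + 1) x b ∩ {ω | Y (n + 1) ω = 1} := by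
      ext ω
      simp only [atRiskY, allZero, Nat.add_sub_cancel, Set.mem_inter_iff, Set.mem_setOf_eq]
      constructor
      · rintro ⟨⟨⟨⟨h1, h2⟩, h3⟩, h4⟩, h5⟩
        exact ⟨⟨⟨⟨fun l a c => (hconsD b l ω h4).trans (h1 l a c),
          fun l a c => (hconsY b l ω h4).trans (h2 l a c)⟩, h3⟩, h4⟩,
          (hconsY b (n + 1) ω h4).trans h5⟩
      · rintro ⟨⟨⟨⟨h1, h2⟩, h3⟩, h4⟩, h5⟩
        exact ⟨⟨⟨⟨fun l a c => ((hconsD b l ω h4).symm).trans (h1 l a c),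
          fun l a c => ((hconsY b l ω h4).symm).trans (h2 l a c)⟩, h3⟩, h4⟩,
          ((hconsY b (n + 1) ω h4).symm).trans h5⟩
    have hARm : MeasurableSet (atRiskY Y D X A (n + 1) x b) := by
      unfold atRiskY
      exact (((measurableSet_allZero hDm (n + 1)).inter
        (measurableSet_allZero hYm n)).inter hCxm).inter (hCAm b)
    rw [cond_apply ((hEm.inter hCxm).inter (hCAm b)), hsetT, hsetC]
    rw [hazY, cond_apply hARm]
  -- identification of the counterfactual hazard of D (at equal components)
  have hbaseD : ∀ b, (b = 0 ∨ b = 1) → ∀ n, n + 1 ≤ K →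
      μ[|allZero (Dsep b b) n ∩ allZero (Ysep b b) n ∩ {ω | X ω = x}]
        {ω | Dsep b b (n + 1) ω = 1} = hazD μ Y D X A (n + 1) x b := by
    intro b hb n hnK
    have hEm : MeasurableSet (allZero (Dsep b b) n ∩ allZero (Ysep b b) n) :=
      (measurableSet_allZero (hDsm b b) n).inter (measurableSet_allZero (hYsm b b) n)
    have htrans := cond_transfer μ K (Ysep b b) (Dsep b b) (hYsm b b) (hDsm b b)
      (hYsbin b b) (hDsbin b b) {ω | X ω = x} {ω | A ω = b} hCxm (hCAm b)
      hposX (hposA x hposX b hb) (hexchS b b b x hb hb hb hposX (hposA x hposX b hb))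
      (allZero (Dsep b b) n ∩ allZero (Ysep b b) n) {ω | Dsep b b (n + 1) ω = 1}
      hEm
      (by
        rintro ω ω' hag ⟨h1, h2⟩
        exact ⟨fun l hl1 hl2 =>
            ((hag l hl1 ((hl2.trans (Nat.le_succ n)).trans hnK)).2).symm.trans (h1 l hl1 hl2),
          fun l hl1 hl2 =>
            ((hag l hl1 ((hl2.trans (Nat.le_succ n)).trans hnK)).1).symm.trans
              (h2 l hl1 hl2)⟩)
      (by
        rintro ω ω' hag ⟨⟨h1, h2⟩, h3⟩
        refine ⟨⟨fun l hl1 hl2 =>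
            ((hag l hl1 ((hl2.trans (Nat.le_succ n)).trans hnK)).2).symm.trans (h1 l hl1 hl2),
          fun l hl1 hl2 =>
            ((hag l hl1 ((hl2.trans (Nat.le_succ n)).trans hnK)).1).symm.trans
              (h2 l hl1 hl2)⟩, ?_⟩
        exact ((hag (n + 1) (by omega) hnK).2).symm.trans h3)
    rw [htrans]
    have hsetC : allZero (Dsep b b) n ∩ allZero (Ysep b b) n ∩ {ω | X ω = x}
        ∩ {ω | A ω = b} = atRiskD Y D X A (n + 1) x b := by
      ext ω
      simp only [atRiskD, allZero, Nat.add_sub_cancel, Set.mem_inter_iff, Set.mem_setOf_eq]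
      constructor
      · rintro ⟨⟨⟨h1, h2⟩, h3⟩, h4⟩
        exact ⟨⟨⟨fun l a c => (hconsD b l ω h4).trans (h1 l a c),
          fun l a c => (hconsY b l ω h4).trans (h2 l a c)⟩, h3⟩, h4⟩
      · rintro ⟨⟨⟨h1, h2⟩, h3⟩, h4⟩
        exact ⟨⟨⟨fun l a c => ((hconsD b l ω h4).symm).trans (h1 l a c),
          fun l a c => ((hconsY b l ω h4).symm).trans (h2 l a c)⟩, h3⟩, h4⟩
    have hsetT : (allZero (Dsep b b) n ∩ allZero (Ysep b b) n ∩ {ω | X ω = x}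
        ∩ {ω | A ω = b}) ∩ {ω | Dsep b b (n + 1) ω = 1}
        = atRiskD Y D X A (n + 1) x b ∩ {ω | D (n + 1) ω = 1} := by
      ext ω
      simp only [atRiskD, allZero, Nat.add_sub_cancel, Set.mem_inter_iff, Set.mem_setOf_eq]
      constructor
      · rintro ⟨⟨⟨⟨h1, h2⟩, h3⟩, h4⟩, h5⟩
        exact ⟨⟨⟨⟨fun l a c => (hconsD b l ω h4).trans (h1 l a c),
          fun l a c => (hconsY b l ω h4).trans (h2 l a c)⟩, h3⟩, h4⟩,
          (hconsD b (n + 1) ω h4).trans h5⟩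
      · rintro ⟨⟨⟨⟨h1, h2⟩, h3⟩, h4⟩, h5⟩
        exact ⟨⟨⟨⟨fun l a c => ((hconsD b l ω h4).symm).trans (h1 l a c),
          fun l a c => ((hconsY b l ω h4).symm).trans (h2 l a c)⟩, h3⟩, h4⟩,
          ((hconsD b (n + 1) ω h4).symm).trans h5⟩
    have hARm : MeasurableSet (atRiskD Y D X A (n + 1) x b) := by
      unfold atRiskD
      exact (((measurableSet_allZero hDm n).inter
        (measurableSet_allZero hYm n)).inter hCxm).inter (hCAm b)
    rw [cond_apply ((hEm.inter hCxm).inter (hCAm b)), hsetT, hsetC]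
    rw [hazD, cond_apply hARm]
  -- full identification of the counterfactual hazards via dismissible components
  have hidentY : ∀ n, n + 1 ≤ K →
      μ[|allZero (Dsep aY aD) (n + 1) ∩ allZero (Ysep aY aD) n ∩ {ω | X ω = x}]
        {ω | Ysep aY aD (n + 1) ω = 1} = hazY μ Y D X A (n + 1) x aY := by
    intro n hnK
    have hd := hdisY aY (n + 1) x haY (by omega) hnK
    simp only [Nat.add_sub_cancel] at hd
    rcases haY with rfl | rfl <;> rcases haD with rfl | rfl
    · exact hbaseY 0 (Or.inl rfl) n hnK
    · rw [hd]; exact hbaseY 0 (Or.inl rfl) n hnK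
    · rw [← hd]; exact hbaseY 1 (Or.inr rfl) n hnK
    · exact hbaseY 1 (Or.inr rfl) n hnK
  have hidentD : ∀ n, n + 1 ≤ K →
      μ[|allZero (Dsep aY aD) n ∩ allZero (Ysep aY aD) n ∩ {ω | X ω = x}]
        {ω | Dsep aY aD (n + 1) ω = 1} = hazD μ Y D X A (n + 1) x aD := by
    intro n hnK
    have hd := hdisD aD (n + 1) x haD (by omega) hnK
    simp only [Nat.add_sub_cancel] at hd
    rcases haY with rfl | rfl <;> rcases haD with rfl | rfl
    · exact hbaseD 0 (Or.inl rfl) n hnK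
    · rw [← hd]; exact hbaseD 1 (Or.inr rfl) n hnK
    · rw [hd]; exact hbaseD 0 (Or.inl rfl) n hnK
    · exact hbaseD 1 (Or.inr rfl) n hnK
  -- main induction
  have main : ∀ c, c + 1 ≤ K →
      μ ({ω | X ω = x} ∩ allZero (Dsep aY aD) (c + 1) ∩ allZero (Ysep aY aD) c)
        = μ {ω | X ω = x} * (1 - hazD μ Y D X A (c + 1) x aD)
            * ∏ l ∈ Icc 1 c,
                (1 - hazD μ Y D X A l x aD) * (1 - hazY μ Y D X A l x aY) := by
    intro c
    induction c with
    | zero =>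
      intro h1K
      rw [allZero_zero, Set.inter_univ]
      rw [show Icc 1 0 = (∅ : Finset ℕ) from Finset.Icc_eq_empty (by omega),
        Finset.prod_empty, mul_one]
      have hE1 : {ω | X ω = x} ∩ allZero (Dsep aY aD) (0 + 1)
          = ({ω | X ω = x}) ∩ {ω | Dsep aY aD (0 + 1) ω = 0} := by
        rw [allZero_succ, allZero_zero, Set.univ_inter]
      rw [show allZero (Dsep aY aD) 1 = allZero (Dsep aY aD) (0 + 1) from rfl, hE1]
      rw [inter_zero_eq μ {ω | X ω = x} hCxm hposX (Dsep aY aD (0 + 1))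
        (hDsm aY aD (0 + 1)) (hDsbin aY aD (0 + 1))]
      have hid := hidentD 0 h1K
      rw [show allZero (Dsep aY aD) 0 ∩ allZero (Ysep aY aD) 0 ∩ {ω | X ω = x}
          = {ω | X ω = x} from by
        rw [allZero_zero, allZero_zero, Set.univ_inter, Set.univ_inter]] at hid
      rw [hid]
    | succ c ih =>
      intro hK2
      have hK1 : c + 1 ≤ K := by omega
      have IH := ih hK1
      set C1 := allZero (Dsep aY aD) (c + 1) ∩ allZero (Ysep aY aD) c ∩ {ω | X ω = x}
        with hC1
      set C2 := allZero (Dsep aY aD) (c + 1) ∩ allZero (Ysep aY aD) (c + 1) ∩ {ω | X ω = x}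
        with hC2
      have hC1m : MeasurableSet C1 :=
        ((measurableSet_allZero (hDsm aY aD) (c + 1)).inter
          (measurableSet_allZero (hYsm aY aD) c)).inter hCxm
      have hC2m : MeasurableSet C2 :=
        ((measurableSet_allZero (hDsm aY aD) (c + 1)).inter
          (measurableSet_allZero (hYsm aY aD) (c + 1))).inter hCxm
      have hC10 : μ C1 ≠ 0 := by
        have h := (hposSep aY aD (c + 1) x haY haD (by omega) hK1 hposX).1
        simpa only [Nat.add_sub_cancel] using h
      have hC20 : μ C2 ≠ 0 := by
        have h := (hposSep aY aD (c + 1 + 1) x haY haD (by omega) hK2 hposX).2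
        simpa only [Nat.add_sub_cancel] using h
      have hE1 : {ω | X ω = x} ∩ allZero (Dsep aY aD) (c + 1 + 1)
          ∩ allZero (Ysep aY aD) (c + 1)
          = C2 ∩ {ω | Dsep aY aD (c + 1 + 1) ω = 0} := by
        rw [hC2, allZero_succ (Dsep aY aD) (c + 1)]
        ext ω; simp only [Set.mem_inter_iff]; tauto
      have hE2 : C2 = C1 ∩ {ω | Ysep aY aD (c + 1) ω = 0} := by
        rw [hC2, hC1, allZero_succ (Ysep aY aD) c]
        ext ω; simp only [Set.mem_inter_iff]; tauto
      have hE3 : μ C1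
          = μ ({ω | X ω = x} ∩ allZero (Dsep aY aD) (c + 1) ∩ allZero (Ysep aY aD) c) := by
        rw [hC1]
        congr 1
        ext ω; simp only [Set.mem_inter_iff]; tauto
      calc μ ({ω | X ω = x} ∩ allZero (Dsep aY aD) (c + 1 + 1)
              ∩ allZero (Ysep aY aD) (c + 1))
          = μ (C2 ∩ {ω | Dsep aY aD (c + 1 + 1) ω = 0}) := by rw [hE1]
        _ = μ C2 * (1 - hazD μ Y D X A (c + 1 + 1) x aD) := by
            rw [inter_zero_eq μ C2 hC2m hC20 (Dsep aY aD (c + 1 + 1))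
              (hDsm aY aD (c + 1 + 1)) (hDsbin aY aD (c + 1 + 1))]
            rw [hidentD (c + 1) hK2]
        _ = μ (C1 ∩ {ω | Ysep aY aD (c + 1) ω = 0})
              * (1 - hazD μ Y D X A (c + 1 + 1) x aD) := by rw [← hE2]
        _ = μ C1 * (1 - hazY μ Y D X A (c + 1) x aY)
              * (1 - hazD μ Y D X A (c + 1 + 1) x aD) := by
            rw [inter_zero_eq μ C1 hC1m hC10 (Ysep aY aD (c + 1))
              (hYsm aY aD (c + 1)) (hYsbin aY aD (c + 1))]
            rw [hidentY c hK1]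
        _ = (μ {ω | X ω = x} * (1 - hazD μ Y D X A (c + 1) x aD)
              * ∏ l ∈ Icc 1 c,
                  (1 - hazD μ Y D X A l x aD) * (1 - hazY μ Y D X A l x aY))
              * (1 - hazY μ Y D X A (c + 1) x aY)
              * (1 - hazD μ Y D X A (c + 1 + 1) x aD) := by
            rw [hE3, IH]
        _ = μ {ω | X ω = x} * (1 - hazD μ Y D X A (c + 1 + 1) x aD)
              * ∏ l ∈ Icc 1 (c + 1),
                  (1 - hazD μ Y D X A l x aD) * (1 - hazY μ Y D X A l x aY) := by
            rw [Finset.prod_Icc_succ_top (by omega : 1 ≤ c + 1)]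
            ring
  obtain ⟨c, rfl⟩ : ∃ c, k = c + 1 := ⟨k - 1, by omega⟩
  simp only [Nat.add_sub_cancel]
  exact main c hkK


end Stmt9
end
end

section
/- Importance weights for the total effect: under Assumption 1, fix k ∈ {1,…,K} and a ∈ {0,1}, and let p^{obs}_{a,k}(x) = P(X = x | Ȳ_{k−1} = 0, D̄_k = 0, A = a) and p^{int}_{a,k}(x) = P(X = x | Ȳ^a_{k−1} = 0, D̄^a_k = 0). Then there exists a constant c > 0, not depending on x, such that for every x with p^{obs}_{a,k}(x) > 0, p^{int}_{a,k}(x) / p^{obs}_{a,k}(x) = c / P(A = a | X = x). -/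
/-!
STATEMENT 10: Importance weights for the total effect. Under Assumption 1, fix
`k ∈ {1,…,K}` and `a ∈ {0,1}`, and let
`p^{obs}_{a,k}(x) = P(X = x | Ȳ_{k−1} = 0, D̄_k = 0, A = a)` and
`p^{int}_{a,k}(x) = P(X = x | Ȳ^a_{k−1} = 0, D̄^a_k = 0)`.
Then there exists a constant `c > 0` (finite, not depending on `x`) such that for
every `x` with `p^{obs}_{a,k}(x) > 0`,
`p^{int}_{a,k}(x) / p^{obs}_{a,k}(x) = c / P(A = a | X = x)`.
-/

open MeasureTheory ProbabilityTheory Finset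
open scoped ENNReal

noncomputable section

namespace Stmt10

variable {Ω 𝓧 : Type*} [MeasurableSpace Ω] [MeasurableSpace 𝓧] [MeasurableSingletonClass 𝓧]

/-- The event that the history `V̄_k = (V_1, …, V_k)` is identically zero; for `k = 0`
this is all of `Ω` (the convention `V̄_0 = 0`). -/
def allZero (V : ℕ → Ω → ℕ) (k : ℕ) : Set Ω :=
  {ω | ∀ l, 1 ≤ l → l ≤ k → V l ω = 0}

/-- Conditioning event of the main-event hazard `h_Y(k,x,a)`:
`{D̄_k = 0, Ȳ_{k−1} = 0, X = x, A = a}` (the competing event is resolved before the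
main event within each interval). -/
def atRiskY (Y D : ℕ → Ω → ℕ) (X : Ω → 𝓧) (A : Ω → ℕ) (k : ℕ) (x : 𝓧) (a : ℕ) : Set Ω :=
  allZero D k ∩ allZero Y (k - 1) ∩ {ω | X ω = x} ∩ {ω | A ω = a}

/-- Conditioning event of the competing-event hazard `h_D(k,x,a)`:
`{D̄_{k−1} = 0, Ȳ_{k−1} = 0, X = x, A = a}`. -/
def atRiskD (Y D : ℕ → Ω → ℕ) (X : Ω → 𝓧) (A : Ω → ℕ) (k : ℕ) (x : 𝓧) (a : ℕ) : Set Ω :=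
  allZero D (k - 1) ∩ allZero Y (k - 1) ∩ {ω | X ω = x} ∩ {ω | A ω = a}

/-- Conditional hazard of the main event,
`h_Y(k,x,a) = P(Y_k = 1 | D̄_k = 0, Ȳ_{k−1} = 0, X = x, A = a)`. -/
def hazY (μ : Measure Ω) (Y D : ℕ → Ω → ℕ) (X : Ω → 𝓧) (A : Ω → ℕ)
    (k : ℕ) (x : 𝓧) (a : ℕ) : ℝ≥0∞ :=
  μ[|atRiskY Y D X A k x a] {ω | Y k ω = 1}

/-- Conditional hazard of the competing event,
`h_D(k,x,a) = P(D_k = 1 | D̄_{k−1} = 0, Ȳ_{k−1} = 0, X = x, A = a)`. -/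
def hazD (μ : Measure Ω) (Y D : ℕ → Ω → ℕ) (X : Ω → 𝓧) (A : Ω → ℕ)
    (k : ℕ) (x : 𝓧) (a : ℕ) : ℝ≥0∞ :=
  μ[|atRiskD Y D X A k x a] {ω | D k ω = 1}

theorem total_effect_importance_weights
    [Countable 𝓧]
    (μ : Measure Ω) [IsProbabilityMeasure μ]
    (Y D : ℕ → Ω → ℕ) (X : Ω → 𝓧) (A : Ω → ℕ)
    -- measurability of the random variables
    (hXm : Measurable X) (hAm : Measurable A)
    (hYm : ∀ k, Measurable (Y k)) (hDm : ∀ k, Measurable (D k))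
    -- binary indicators, absorbing events, mutual exclusivity
    (hYbin : ∀ k ω, Y k ω = 0 ∨ Y k ω = 1) (hDbin : ∀ k ω, D k ω = 0 ∨ D k ω = 1)
    (hYmono : ∀ k ω, Y k ω ≤ Y (k + 1) ω) (hDmono : ∀ k ω, D k ω ≤ D (k + 1) ω)
    (hexcl : ∀ k ω, Y k ω * D k ω = 0)
    (hAbin : ∀ ω, A ω = 0 ∨ A ω = 1)
    (K : ℕ) (hK : 1 ≤ K)
    -- counterfactual indicators Y^a_k, D^a_k under the intervention do(A = a)
    (Ycf Dcf : ℕ → ℕ → Ω → ℕ)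
    (hYcfm : ∀ a k, Measurable (Ycf a k)) (hDcfm : ∀ a k, Measurable (Dcf a k))
    (hYcfbin : ∀ a k ω, Ycf a k ω = 0 ∨ Ycf a k ω = 1)
    (hDcfbin : ∀ a k ω, Dcf a k ω = 0 ∨ Dcf a k ω = 1)
    (hYcfmono : ∀ a k ω, Ycf a k ω ≤ Ycf a (k + 1) ω)
    (hDcfmono : ∀ a k ω, Dcf a k ω ≤ Dcf a (k + 1) ω)
    (hcfexcl : ∀ a k ω, Ycf a k ω * Dcf a k ω = 0)
    -- Assumption 1 (i): exchangeability — the family (Y^a_1, D^a_1, …, Y^a_K, D^a_K)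
    -- is conditionally independent of A given X (stated through the atoms of the
    -- discrete counterfactual family)
    (hexch : ∀ a a' x, (a = 0 ∨ a = 1) → (a' = 0 ∨ a' = 1) →
      μ {ω | X ω = x} ≠ 0 → μ ({ω | X ω = x} ∩ {ω | A ω = a'}) ≠ 0 →
      ∀ f g : ℕ → ℕ,
        μ[|{ω | X ω = x} ∩ {ω | A ω = a'}]
            {ω | ∀ j, 1 ≤ j → j ≤ K → (Ycf a j ω = f j ∧ Dcf a j ω = g j)}
          = μ[|{ω | X ω = x}]
              {ω | ∀ j, 1 ≤ j → j ≤ K → (Ycf a j ω = f j ∧ Dcf a j ω = g j)})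
    -- Assumption 1 (ii): positivity
    (hposA : ∀ x, μ {ω | X ω = x} ≠ 0 → ∀ a', (a' = 0 ∨ a' = 1) →
      μ ({ω | X ω = x} ∩ {ω | A ω = a'}) ≠ 0)
    -- Assumption 1 (iii): consistency
    (hconsY : ∀ k ω, Y k ω = A ω * Ycf 1 k ω + (1 - A ω) * Ycf 0 k ω)
    (hconsD : ∀ k ω, D k ω = A ω * Dcf 1 k ω + (1 - A ω) * Dcf 0 k ω)
    (k : ℕ) (hk1 : 1 ≤ k) (hkK : k ≤ K) (a : ℕ) (ha : a = 0 ∨ a = 1)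
    -- positivity of the observational and interventional at-risk events
    (hposObs : μ (allZero Y (k - 1) ∩ allZero D k ∩ {ω | A ω = a}) ≠ 0)
    (hposInt : μ (allZero (Ycf a) (k - 1) ∩ allZero (Dcf a) k) ≠ 0) :
    ∃ c : ℝ≥0∞, c ≠ 0 ∧ c ≠ ⊤ ∧
      ∀ x : 𝓧,
        μ[|allZero Y (k - 1) ∩ allZero D k ∩ {ω | A ω = a}] {ω | X ω = x} ≠ 0 →
        μ[|allZero (Ycf a) (k - 1) ∩ allZero (Dcf a) k] {ω | X ω = x}
            / μ[|allZero Y (k - 1) ∩ allZero D k ∩ {ω | A ω = a}] {ω | X ω = x}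
          = c / μ[|{ω | X ω = x}] {ω | A ω = a} := by
  classical
  -- measurability of allZero sets
  have mAZ : ∀ (V : ℕ → Ω → ℕ), (∀ l, Measurable (V l)) → ∀ m, MeasurableSet (allZero V m) := by
    intro V hV m
    have hrepr : allZero V m = ⋂ l ∈ Finset.Icc 1 m, (V l) ⁻¹' {0} := by
      ext ω
      simp [allZero, Finset.mem_Icc, and_imp]
    rw [hrepr]
    exact MeasurableSet.biInter (Finset.Icc 1 m).countable_toSet
      (fun l _ => (hV l) (measurableSet_singleton 0))
  set Cs : Set Ω := allZero (Ycf a) (k - 1) ∩ allZero (Dcf a) k with hCdef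
  have mC : MeasurableSet Cs :=
    (mAZ _ (hYcfm a) (k - 1)).inter (mAZ _ (hDcfm a) k)
  have mA : MeasurableSet {ω | A ω = a} := hAm (measurableSet_singleton a)
  have mX : ∀ x : 𝓧, MeasurableSet {ω | X ω = x} :=
    fun x => hXm (measurableSet_singleton x)
  -- consistency: on {A = a}, the observed processes agree with the counterfactuals
  have hYc : ∀ ω, A ω = a → ∀ l, Y l ω = Ycf a l ω := by
    intro ω hω l
    rcases ha with rfl | rfl <;> simp [hconsY l ω, hω]
  have hDc : ∀ ω, A ω = a → ∀ l, D l ω = Dcf a l ω := by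
    intro ω hω l
    rcases ha with rfl | rfl <;> simp [hconsD l ω, hω]
  -- F1: the observational at-risk event equals Cs ∩ {A = a}
  have hF1 : allZero Y (k - 1) ∩ allZero D k ∩ {ω | A ω = a} = Cs ∩ {ω | A ω = a} := by
    ext ω
    simp only [Set.mem_inter_iff, Set.mem_setOf_eq, allZero, hCdef]
    constructor
    · rintro ⟨⟨h1, h2⟩, h3⟩
      exact ⟨⟨fun l hl1 hl2 => (hYc ω h3 l) ▸ h1 l hl1 hl2,
             fun l hl1 hl2 => (hDc ω h3 l) ▸ h2 l hl1 hl2⟩, h3⟩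
    · rintro ⟨⟨h1, h2⟩, h3⟩
      exact ⟨⟨fun l hl1 hl2 => (hYc ω h3 l).trans (h1 l hl1 hl2),
             fun l hl1 hl2 => (hDc ω h3 l).trans (h2 l hl1 hl2)⟩, h3⟩
  set B : Set Ω := allZero Y (k - 1) ∩ allZero D k ∩ {ω | A ω = a} with hBdef
  have mB : MeasurableSet B := by rw [hF1]; exact mC.inter mA
  -- atom decomposition of Cs
  set ψ : Ω → (Fin K → ℕ) × (Fin K → ℕ) :=
    fun ω => (fun j => Ycf a ((j : ℕ) + 1) ω, fun j => Dcf a ((j : ℕ) + 1) ω) with hψ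
  set T : Set ((Fin K → ℕ) × (Fin K → ℕ)) :=
    {p | (∀ j : Fin K, (j : ℕ) + 1 ≤ k - 1 → p.1 j = 0) ∧
         (∀ j : Fin K, (j : ℕ) + 1 ≤ k → p.2 j = 0)} with hT
  have hCpre : Cs = ψ ⁻¹' T := by
    ext ω
    simp only [hCdef, Set.mem_inter_iff, Set.mem_preimage, Set.mem_setOf_eq, allZero, hψ, hT]
    constructor
    · rintro ⟨h1, h2⟩
      exact ⟨fun j hj => h1 ((j : ℕ) + 1) (by omega) hj,
             fun j hj => h2 ((j : ℕ) + 1) (by omega) hj⟩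
    · rintro ⟨h1, h2⟩
      constructor
      · intro l hl1 hl2
        have hlK : l - 1 < K := by omega
        have := h1 ⟨l - 1, hlK⟩ (by simpa using (by omega : l - 1 + 1 ≤ k - 1))
        simpa [Nat.sub_add_cancel hl1] using this
      · intro l hl1 hl2
        have hlK : l - 1 < K := by omega
        have := h2 ⟨l - 1, hlK⟩ (by simpa using (by omega : l - 1 + 1 ≤ k))
        simpa [Nat.sub_add_cancel hl1] using this
  -- each fiber of ψ is one of the atoms of the exchangeability hypothesis
  have hfiber : ∀ p : (Fin K → ℕ) × (Fin K → ℕ),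
      ψ ⁻¹' {p} = {ω | ∀ j, 1 ≤ j → j ≤ K →
        (Ycf a j ω = (fun j' => if h : 1 ≤ j' ∧ j' ≤ K then p.1 ⟨j' - 1, by omega⟩ else 0) j ∧
         Dcf a j ω = (fun j' => if h : 1 ≤ j' ∧ j' ≤ K then p.2 ⟨j' - 1, by omega⟩ else 0) j)} := by
    intro p
    ext ω
    simp only [Set.mem_preimage, Set.mem_singleton_iff, Set.mem_setOf_eq, hψ, Prod.ext_iff,
      funext_iff]
    constructor
    · rintro ⟨h1, h2⟩ j hj1 hjK
      have hjK' : j - 1 < K := by omega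
      have e1 := h1 ⟨j - 1, hjK'⟩
      have e2 := h2 ⟨j - 1, hjK'⟩
      rw [dif_pos ⟨hj1, hjK⟩, dif_pos ⟨hj1, hjK⟩]
      have hj' : j - 1 + 1 = j := by omega
      rw [hj'] at e1 e2
      exact ⟨e1, e2⟩
    · intro h
      constructor
      · intro j
        have hj := (h ((j : ℕ) + 1) (by omega) (by omega)).1
        rw [dif_pos ⟨by omega, by omega⟩] at hj
        exact hj
      · intro j
        have hj := (h ((j : ℕ) + 1) (by omega) (by omega)).2
        rw [dif_pos ⟨by omega, by omega⟩] at hj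
        exact hj
  have mfiber : ∀ p : (Fin K → ℕ) × (Fin K → ℕ), MeasurableSet (ψ ⁻¹' {p}) := by
    intro p
    have : ψ ⁻¹' {p} =
        (⋂ j : Fin K, (Ycf a ((j : ℕ) + 1)) ⁻¹' {p.1 j}) ∩
        (⋂ j : Fin K, (Dcf a ((j : ℕ) + 1)) ⁻¹' {p.2 j}) := by
      ext ω
      simp [hψ, Prod.ext_iff, funext_iff]
    rw [this]
    exact (MeasurableSet.iInter fun j => (hYcfm a _) (measurableSet_singleton _)).inter
      (MeasurableSet.iInter fun j => (hDcfm a _) (measurableSet_singleton _))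
  -- decomposition of the measure of Cs under any measure
  have hdecomp : ∀ ν : Measure Ω, ν Cs = ∑' p : T, ν (ψ ⁻¹' {(p : (Fin K → ℕ) × (Fin K → ℕ))}) := by
    intro ν
    have hun : Cs = ⋃ p : T, ψ ⁻¹' {(p : (Fin K → ℕ) × (Fin K → ℕ))} := by
      rw [hCpre]
      ext ω
      simp only [Set.mem_preimage, Set.mem_iUnion, Set.mem_singleton_iff]
      exact ⟨fun h => ⟨⟨ψ ω, h⟩, rfl⟩, fun ⟨p, hp⟩ => hp ▸ p.2⟩
    rw [hun]
    refine measure_iUnion ?_ (fun p => mfiber _)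
    intro p q hpq
    simp only [Function.onFun, Set.disjoint_left]
    intro ω h1 h2
    simp only [Set.mem_preimage, Set.mem_singleton_iff] at h1 h2
    exact hpq (Subtype.ext (h1 ▸ h2))
  -- basic positivity facts
  have hBne : μ B ≠ 0 := hposObs
  have hBtop : μ B ≠ ⊤ := measure_ne_top μ B
  have hCne : μ Cs ≠ 0 := hposInt
  have hCtop : μ Cs ≠ ⊤ := measure_ne_top μ Cs
  have hCaB : μ (Cs ∩ {ω | A ω = a}) = μ B := by rw [hF1]
  refine ⟨μ (Cs ∩ {ω | A ω = a}) / μ Cs, ?_, ?_, ?_⟩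
  · rw [ENNReal.div_ne_zero]
    exact ⟨by rw [hCaB]; exact hBne, hCtop⟩
  · exact (ENNReal.div_lt_top (by rw [hCaB]; exact hBtop) hCne).ne
  intro x hx
  -- nonvanishing facts at x
  have hBx : μ (B ∩ {ω | X ω = x}) ≠ 0 := by
    intro h0
    exact hx (by rw [cond_apply mB, h0, mul_zero])
  have hsub1 : B ∩ {ω | X ω = x} ⊆ {ω | X ω = x} := Set.inter_subset_right
  have hsub2 : B ∩ {ω | X ω = x} ⊆ {ω | X ω = x} ∩ {ω | A ω = a} := by
    rw [hBdef]
    intro ω hω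
    exact ⟨hω.2, hω.1.2⟩
  have hxne : μ {ω | X ω = x} ≠ 0 := fun h0 => hBx (le_antisymm (h0 ▸ measure_mono hsub1) zero_le)
  have hxane : μ ({ω | X ω = x} ∩ {ω | A ω = a}) ≠ 0 :=
    fun h0 => hBx (le_antisymm (h0 ▸ measure_mono hsub2) zero_le)
  have hxtop : μ {ω | X ω = x} ≠ ⊤ := measure_ne_top _ _
  have hxatop : μ ({ω | X ω = x} ∩ {ω | A ω = a}) ≠ ⊤ := measure_ne_top _ _
  -- exchangeability for the event Cs
  have hexchC : μ[|{ω | X ω = x} ∩ {ω | A ω = a}] Cs = μ[|{ω | X ω = x}] Cs := by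
    rw [hdecomp (μ[|{ω | X ω = x} ∩ {ω | A ω = a}]), hdecomp (μ[|{ω | X ω = x}])]
    refine tsum_congr fun p => ?_
    rw [hfiber]
    exact hexch a a x ha ha hxne hxane _ _
  -- cross-multiplied form of exchangeability
  have Hcross : μ (Cs ∩ {ω | A ω = a} ∩ {ω | X ω = x}) * μ {ω | X ω = x}
      = μ (Cs ∩ {ω | X ω = x}) * μ ({ω | X ω = x} ∩ {ω | A ω = a}) := by
    have h1 : ({ω | X ω = x} ∩ {ω | A ω = a}) ∩ Cs = Cs ∩ {ω | A ω = a} ∩ {ω | X ω = x} := by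
      ext ω; simp only [Set.mem_inter_iff]; tauto
    have h2 : {ω | X ω = x} ∩ Cs = Cs ∩ {ω | X ω = x} := Set.inter_comm _ _
    have e := hexchC
    rw [cond_apply ((mX x).inter mA), cond_apply (mX x), h1, h2] at e
    have e' := congrArg (fun z => μ ({ω | X ω = x} ∩ {ω | A ω = a}) * μ {ω | X ω = x} * z) e
    calc μ (Cs ∩ {ω | A ω = a} ∩ {ω | X ω = x}) * μ {ω | X ω = x}
        = μ ({ω | X ω = x} ∩ {ω | A ω = a}) * μ {ω | X ω = x} *
            ((μ ({ω | X ω = x} ∩ {ω | A ω = a}))⁻¹ * μ (Cs ∩ {ω | A ω = a} ∩ {ω | X ω = x})) := by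
          rw [← mul_assoc, mul_comm (μ ({ω | X ω = x} ∩ {ω | A ω = a})) (μ {ω | X ω = x}),
            mul_assoc (μ {ω | X ω = x}), ENNReal.mul_inv_cancel hxane hxatop, mul_one,
            mul_comm]
      _ = μ ({ω | X ω = x} ∩ {ω | A ω = a}) * μ {ω | X ω = x} *
            ((μ {ω | X ω = x})⁻¹ * μ (Cs ∩ {ω | X ω = x})) := e'
      _ = μ (Cs ∩ {ω | X ω = x}) * μ ({ω | X ω = x} ∩ {ω | A ω = a}) := by
          rw [mul_assoc, ← mul_assoc (μ {ω | X ω = x}), ENNReal.mul_inv_cancel hxne hxtop,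
            one_mul, mul_comm]
  -- remaining pure arithmetic
  have hBxeq : B ∩ {ω | X ω = x} = Cs ∩ {ω | A ω = a} ∩ {ω | X ω = x} := by
    rw [hF1]
  have hBxne : μ (Cs ∩ {ω | A ω = a} ∩ {ω | X ω = x}) ≠ 0 := hBxeq ▸ hBx
  have hCxne : μ (Cs ∩ {ω | X ω = x}) ≠ 0 := by
    intro h0
    apply hBxne
    refine le_antisymm ?_ zero_le
    rw [← h0]
    exact measure_mono (fun ω hω => ⟨hω.1.1, hω.2⟩)
  have hCaBne : μ (Cs ∩ {ω | A ω = a}) ≠ 0 := by rw [hCaB]; exact hBne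
  have hCaBtop : μ (Cs ∩ {ω | A ω = a}) ≠ ⊤ := measure_ne_top _ _
  have hμB : μ B = μ (Cs ∩ {ω | A ω = a}) := hCaB.symm
  rw [cond_apply mC μ {ω | X ω = x}, cond_apply mB μ {ω | X ω = x},
    cond_apply (mX x) μ {ω | A ω = a}, hBxeq, hμB]
  set m1 := μ Cs
  set m2 := μ (Cs ∩ {ω | X ω = x})
  set m3 := μ (Cs ∩ {ω | A ω = a})
  set m4 := μ (Cs ∩ {ω | A ω = a} ∩ {ω | X ω = x})
  set mx := μ {ω | X ω = x}
  set mxa := μ ({ω | X ω = x} ∩ {ω | A ω = a})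
  have hm2top : m2 ≠ ⊤ := measure_ne_top _ _
  have hm4top : m4 ≠ ⊤ := measure_ne_top _ _
  -- goal: (m1⁻¹ * m2) / (m3⁻¹ * m4) = (m3 / m1) / (mx⁻¹ * mxa)
  have hm1invne : m1⁻¹ ≠ 0 := ENNReal.inv_ne_zero.mpr hCtop
  have hm1invtop : m1⁻¹ ≠ ⊤ := ENNReal.inv_ne_top.mpr hCne
  have hm3invne : m3⁻¹ ≠ 0 := ENNReal.inv_ne_zero.mpr hCaBtop
  have hm3invtop : m3⁻¹ ≠ ⊤ := ENNReal.inv_ne_top.mpr hCaBne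
  have hmxinvne : mx⁻¹ ≠ 0 := ENNReal.inv_ne_zero.mpr hxtop
  have hmxinvtop : mx⁻¹ ≠ ⊤ := ENNReal.inv_ne_top.mpr hxne
  rw [ENNReal.div_eq_div_iff (mul_ne_zero hmxinvne hxane)
    (ENNReal.mul_ne_top hmxinvtop hxatop)
    (mul_ne_zero hm3invne hBxne) (ENNReal.mul_ne_top hm3invtop hm4top)]
  -- (mx⁻¹*mxa) * (m1⁻¹*m2) = (m3⁻¹*m4) * (m3/m1)
  rw [ENNReal.div_eq_inv_mul]
  calc mx⁻¹ * mxa * (m1⁻¹ * m2)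
      = m1⁻¹ * (mx⁻¹ * (m2 * mxa)) := by ring
    _ = m1⁻¹ * (mx⁻¹ * (m4 * mx)) := by rw [← Hcross]
    _ = m1⁻¹ * (mx⁻¹ * mx * m4) := by ring
    _ = m1⁻¹ * m4 := by rw [ENNReal.inv_mul_cancel hxne hxtop, one_mul]
    _ = m3⁻¹ * m4 * (m3 * m1⁻¹) := by
        rw [mul_comm (m3⁻¹) m4, mul_assoc, ← mul_assoc (m3⁻¹), ENNReal.inv_mul_cancel hCaBne hCaBtop,
          one_mul, mul_comm m4 m1⁻¹]
    _ = m3⁻¹ * m4 * (m1⁻¹ * m3) := by rw [mul_comm m3 m1⁻¹]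

end Stmt10
end
end

section
/- Importance weights for the direct effect: under Assumptions 1 and 2, fix k ∈ {1,…,K} and a ∈ {0,1}, and let p^{obs}_{a,k}(x) = P(X = x | Ȳ_{k−1} = 0, D̄_k = 0, A = a) and p^{int}_{a,k}(x) = P(X = x | Ȳ^{a,d̄=0}_{k−1} = 0). Assume h_D(l,x,a) < 1 for all l ≤ k. Then there exists a constant c > 0, not depending on x, such that for every x with p^{obs}_{a,k}(x) > 0, p^{int}_{a,k}(x) / p^{obs}_{a,k}(x) = c / [P(A = a | X = x) · Π_{l=1}^{k} (1 − h_D(l,x,a))]. -/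
/-!
STATEMENT 11: Importance weights for the direct effect. Under Assumptions 1 and 2,
fix `k ∈ {1,…,K}` and `a ∈ {0,1}`, and let
`p^{obs}_{a,k}(x) = P(X = x | Ȳ_{k−1} = 0, D̄_k = 0, A = a)` and
`p^{int}_{a,k}(x) = P(X = x | Ȳ^{a,d̄=0}_{k−1} = 0)`.
Assume `h_D(l,x,a) < 1` for all `l ≤ k`. Then there exists a constant `c > 0`
(finite, not depending on `x`) such that for every `x` with `p^{obs}_{a,k}(x) > 0`,
`p^{int}_{a,k}(x) / p^{obs}_{a,k}(x)
   = c / [P(A = a | X = x) · Π_{l=1}^{k} (1 − h_D(l,x,a))]`.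
-/

open MeasureTheory ProbabilityTheory Finset
open scoped ENNReal

noncomputable section

namespace Stmt11

variable {Ω 𝓧 : Type*} [MeasurableSpace Ω] [MeasurableSpace 𝓧] [MeasurableSingletonClass 𝓧]

/-- The event that the history `V̄_k = (V_1, …, V_k)` is identically zero; for `k = 0`
this is all of `Ω` (the convention `V̄_0 = 0`). -/
def allZero (V : ℕ → Ω → ℕ) (k : ℕ) : Set Ω :=
  {ω | ∀ l, 1 ≤ l → l ≤ k → V l ω = 0}

/-- Conditioning event of the main-event hazard `h_Y(k,x,a)`:
`{D̄_k = 0, Ȳ_{k−1} = 0, X = x, A = a}` (the competing event is resolved before the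
main event within each interval). -/
def atRiskY (Y D : ℕ → Ω → ℕ) (X : Ω → 𝓧) (A : Ω → ℕ) (k : ℕ) (x : 𝓧) (a : ℕ) : Set Ω :=
  allZero D k ∩ allZero Y (k - 1) ∩ {ω | X ω = x} ∩ {ω | A ω = a}

/-- Conditioning event of the competing-event hazard `h_D(k,x,a)`:
`{D̄_{k−1} = 0, Ȳ_{k−1} = 0, X = x, A = a}`. -/
def atRiskD (Y D : ℕ → Ω → ℕ) (X : Ω → 𝓧) (A : Ω → ℕ) (k : ℕ) (x : 𝓧) (a : ℕ) : Set Ω :=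
  allZero D (k - 1) ∩ allZero Y (k - 1) ∩ {ω | X ω = x} ∩ {ω | A ω = a}

/-- Conditional hazard of the main event,
`h_Y(k,x,a) = P(Y_k = 1 | D̄_k = 0, Ȳ_{k−1} = 0, X = x, A = a)`. -/
def hazY (μ : Measure Ω) (Y D : ℕ → Ω → ℕ) (X : Ω → 𝓧) (A : Ω → ℕ)
    (k : ℕ) (x : 𝓧) (a : ℕ) : ℝ≥0∞ :=
  μ[|atRiskY Y D X A k x a] {ω | Y k ω = 1}

/-- Conditional hazard of the competing event,
`h_D(k,x,a) = P(D_k = 1 | D̄_{k−1} = 0, Ȳ_{k−1} = 0, X = x, A = a)`. -/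
def hazD (μ : Measure Ω) (Y D : ℕ → Ω → ℕ) (X : Ω → 𝓧) (A : Ω → ℕ)
    (k : ℕ) (x : 𝓧) (a : ℕ) : ℝ≥0∞ :=
  μ[|atRiskD Y D X A k x a] {ω | D k ω = 1}

lemma allZero_zero (V : ℕ → Ω → ℕ) : allZero V 0 = Set.univ := by
  ext ω
  simp only [allZero, Set.mem_setOf_eq, Set.mem_univ, iff_true]
  intro l h1 h0; omega

lemma allZero_succ (V : ℕ → Ω → ℕ) (m : ℕ) :
    allZero V (m+1) = allZero V m ∩ {ω | V (m+1) ω = 0} := by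
  ext ω
  simp only [allZero, Set.mem_inter_iff, Set.mem_setOf_eq]
  constructor
  · intro h; exact ⟨fun l h1 h2 => h l h1 (by omega), h (m+1) (by omega) le_rfl⟩
  · rintro ⟨h, hm⟩ l h1 h2
    rcases eq_or_lt_of_le h2 with rfl | h2
    · exact hm
    · exact h l h1 (by omega)

lemma measurableSet_allZero {V : ℕ → Ω → ℕ} (hV : ∀ l, Measurable (V l)) (m : ℕ) :
    MeasurableSet (allZero V m) := by
  have h : allZero V m = ⋂ l, ⋂ (_ : 1 ≤ l), ⋂ (_ : l ≤ m), (V l) ⁻¹' {0} := by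
    ext ω; simp [allZero]
  rw [h]
  exact .iInter fun l => .iInter fun _ => .iInter fun _ => hV l (measurableSet_singleton 0)

lemma prod_Icc_bot {M : Type*} [CommMonoid M] {a b : ℕ} (hab : a ≤ b) (f : ℕ → M) :
    ∏ i ∈ Icc a b, f i = f a * ∏ i ∈ Icc (a+1) b, f i := by
  have h : Icc a b = insert a (Icc (a+1) b) := by
    ext i; simp only [Finset.mem_Icc, Finset.mem_insert]; omega
  rw [h, Finset.prod_insert (by simp only [Finset.mem_Icc]; omega)]

lemma zeros_eq_biUnion (V : ℕ → Ω → ℕ)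
    (hmono : ∀ l ω, V l ω ≤ V (l+1) ω) (hbin : ∀ l ω, V l ω = 0 ∨ V l ω = 1)
    {b k K : ℕ} (hk1 : 1 ≤ k) (hbk : b ≤ k) (hkK : k ≤ K) :
    {ω : Ω | ∀ l, b ≤ l → l ≤ k - 1 → V l ω = 0}
      = ⋃ t ∈ Finset.Icc k (K+1),
          {ω | ∀ l, b ≤ l → l ≤ K → V l ω = if t ≤ l then 1 else 0} := by
  classical
  have hM : ∀ ω, Monotone fun l => V l ω := fun ω => monotone_nat_of_le_succ (fun l => hmono l ω)
  ext ω
  simp only [Set.mem_setOf_eq, Set.mem_iUnion, Finset.mem_Icc, exists_prop]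
  constructor
  · intro h
    by_cases hall : ∀ l, b ≤ l → l ≤ K → V l ω = 0
    · exact ⟨K+1, ⟨by omega, le_rfl⟩, fun l h1 h2 => by
        rw [if_neg (by omega)]; exact hall l h1 h2⟩
    · push_neg at hall
      have hex : ∃ l, b ≤ l ∧ l ≤ K ∧ V l ω = 1 := by
        obtain ⟨l, h1, h2, h3⟩ := hall
        exact ⟨l, h1, h2, (hbin l ω).resolve_left h3⟩
      obtain ⟨ht1, ht2, ht3⟩ := Nat.find_spec hex
      have htk : k ≤ Nat.find hex := by
        by_contra hc
        push_neg at hc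
        have h0 := h (Nat.find hex) ht1 (by omega)
        omega
      refine ⟨Nat.find hex, ⟨htk, by omega⟩, fun l h1 h2 => ?_⟩
      by_cases hl : Nat.find hex ≤ l
      · rw [if_pos hl]
        have hle := hM ω hl
        rcases hbin l ω with h0 | h1'
        · simp only at hle; omega
        · exact h1'
      · rw [if_neg hl]
        have hnot := Nat.find_min hex (show l < Nat.find hex by omega)
        rcases hbin l ω with h0 | h1'
        · exact h0
        · exact absurd ⟨h1, by omega, h1'⟩ hnot
  · rintro ⟨t, ⟨ht1, ht2⟩, h⟩ l h1 h2
    have h3 := h l h1 (by omega)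
    rwa [if_neg (by omega)] at h3

lemma measure_zeros_eq (ν₁ ν₂ : Measure Ω) (V : ℕ → Ω → ℕ) (hVm : ∀ l, Measurable (V l))
    (hmono : ∀ l ω, V l ω ≤ V (l+1) ω) (hbin : ∀ l ω, V l ω = 0 ∨ V l ω = 1)
    {b k K : ℕ} (hk1 : 1 ≤ k) (hbk : b ≤ k) (hkK : k ≤ K)
    (h : ∀ f : ℕ → ℕ, ν₁ {ω | ∀ l, b ≤ l → l ≤ K → V l ω = f l}
                    = ν₂ {ω | ∀ l, b ≤ l → l ≤ K → V l ω = f l}) :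
    ν₁ {ω | ∀ l, b ≤ l → l ≤ k - 1 → V l ω = 0}
      = ν₂ {ω | ∀ l, b ≤ l → l ≤ k - 1 → V l ω = 0} := by
  have hset := zeros_eq_biUnion V hmono hbin hk1 hbk hkK
  have hmble : ∀ t : ℕ,
      MeasurableSet {ω : Ω | ∀ l, b ≤ l → l ≤ K → V l ω = (if t ≤ l then 1 else 0)} := by
    intro t
    have heq : {ω : Ω | ∀ l, b ≤ l → l ≤ K → V l ω = (if t ≤ l then 1 else 0)}
        = ⋂ l, ⋂ (_ : b ≤ l), ⋂ (_ : l ≤ K), (V l) ⁻¹' {(if t ≤ l then 1 else 0)} := by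
      ext ω; simp
    rw [heq]
    exact .iInter fun l => .iInter fun _ => .iInter fun _ => hVm l (measurableSet_singleton _)
  have hdisj : (↑(Finset.Icc k (K+1)) : Set ℕ).PairwiseDisjoint
      (fun t => {ω : Ω | ∀ l, b ≤ l → l ≤ K → V l ω = (if t ≤ l then 1 else 0)}) := by
    intro s hs t ht hst
    simp only [Finset.coe_Icc, Set.mem_Icc] at hs ht
    refine Set.disjoint_left.2 fun ω hω1 hω2 => ?_
    simp only [Set.mem_setOf_eq] at hω1 hω2
    rcases lt_or_gt_of_ne hst with hlt | hlt
    · have h1 := hω1 s (by omega) (by omega)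
      have h2 := hω2 s (by omega) (by omega)
      rw [if_pos le_rfl] at h1
      rw [if_neg (by omega)] at h2
      omega
    · have h1 := hω1 t (by omega) (by omega)
      have h2 := hω2 t (by omega) (by omega)
      rw [if_neg (by omega)] at h1
      rw [if_pos le_rfl] at h2
      omega
  rw [hset, measure_biUnion_finset hdisj (fun t _ => hmble t),
      measure_biUnion_finset hdisj (fun t _ => hmble t)]
  exact Finset.sum_congr rfl fun t _ => h _

lemma ennreal_calc (g b w q d y : ℝ≥0∞) (hg0 : g ≠ 0) (hgt : g ≠ ⊤) (hb0 : b ≠ 0)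
    (hbt : b ≠ ⊤) (hw0 : w ≠ 0) (hwt : w ≠ ⊤) (hq0 : q ≠ 0) (hqt : q ≠ ⊤)
    (hd0 : d ≠ 0) (hdt : d ≠ ⊤) (hy0 : y ≠ 0) (hyt : y ≠ ⊤) :
    (g⁻¹ * (w * y)) / (b⁻¹ * (q * d * y)) = (b * g⁻¹) / ((w⁻¹ * q) * d) := by
  have hLt : (g⁻¹ * (w * y)) / (b⁻¹ * (q * d * y)) ≠ ⊤ :=
    (ENNReal.div_lt_top (ENNReal.mul_ne_top (ENNReal.inv_ne_top.2 hg0)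
        (ENNReal.mul_ne_top hwt hyt))
      (mul_ne_zero (ENNReal.inv_ne_zero.2 hbt) (mul_ne_zero (mul_ne_zero hq0 hd0) hy0))).ne
  have hRt : (b * g⁻¹) / ((w⁻¹ * q) * d) ≠ ⊤ :=
    (ENNReal.div_lt_top (ENNReal.mul_ne_top hbt (ENNReal.inv_ne_top.2 hg0))
      (mul_ne_zero (mul_ne_zero (ENNReal.inv_ne_zero.2 hwt) hq0) hd0)).ne
  rw [← ENNReal.toReal_eq_toReal_iff' hLt hRt]
  rw [ENNReal.toReal_div, ENNReal.toReal_div]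
  simp only [ENNReal.toReal_mul, ENNReal.toReal_inv]
  have Hg := ENNReal.toReal_ne_zero.2 ⟨hg0, hgt⟩
  have Hb := ENNReal.toReal_ne_zero.2 ⟨hb0, hbt⟩
  have Hw := ENNReal.toReal_ne_zero.2 ⟨hw0, hwt⟩
  have Hq := ENNReal.toReal_ne_zero.2 ⟨hq0, hqt⟩
  have Hd := ENNReal.toReal_ne_zero.2 ⟨hd0, hdt⟩
  have Hy := ENNReal.toReal_ne_zero.2 ⟨hy0, hyt⟩
  field_simp


set_option maxHeartbeats 1600000

theorem direct_effect_importance_weights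
    [Countable 𝓧]
    (μ : Measure Ω) [IsProbabilityMeasure μ]
    (Y D : ℕ → Ω → ℕ) (X : Ω → 𝓧) (A : Ω → ℕ)
    -- measurability of the random variables
    (hXm : Measurable X) (hAm : Measurable A)
    (hYm : ∀ k, Measurable (Y k)) (hDm : ∀ k, Measurable (D k))
    -- binary indicators, absorbing events, mutual exclusivity
    (hYbin : ∀ k ω, Y k ω = 0 ∨ Y k ω = 1) (hDbin : ∀ k ω, D k ω = 0 ∨ D k ω = 1)
    (hYmono : ∀ k ω, Y k ω ≤ Y (k + 1) ω) (hDmono : ∀ k ω, D k ω ≤ D (k + 1) ω)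
    (hexcl : ∀ k ω, Y k ω * D k ω = 0)
    (hAbin : ∀ ω, A ω = 0 ∨ A ω = 1)
    (K : ℕ) (hK : 1 ≤ K)
    -- counterfactual indicators Y^a_k, D^a_k under the intervention do(A = a)
    (Ycf Dcf : ℕ → ℕ → Ω → ℕ)
    (hYcfm : ∀ a k, Measurable (Ycf a k)) (hDcfm : ∀ a k, Measurable (Dcf a k))
    (hYcfbin : ∀ a k ω, Ycf a k ω = 0 ∨ Ycf a k ω = 1)
    (hDcfbin : ∀ a k ω, Dcf a k ω = 0 ∨ Dcf a k ω = 1)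
    (hYcfmono : ∀ a k ω, Ycf a k ω ≤ Ycf a (k + 1) ω)
    (hDcfmono : ∀ a k ω, Dcf a k ω ≤ Dcf a (k + 1) ω)
    (hcfexcl : ∀ a k ω, Ycf a k ω * Dcf a k ω = 0)
    -- Assumption 1 (i): exchangeability — the family (Y^a_1, D^a_1, …, Y^a_K, D^a_K)
    -- is conditionally independent of A given X (stated through the atoms of the
    -- discrete counterfactual family)
    (hexch : ∀ a a' x, (a = 0 ∨ a = 1) → (a' = 0 ∨ a' = 1) →
      μ {ω | X ω = x} ≠ 0 → μ ({ω | X ω = x} ∩ {ω | A ω = a'}) ≠ 0 →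
      ∀ f g : ℕ → ℕ,
        μ[|{ω | X ω = x} ∩ {ω | A ω = a'}]
            {ω | ∀ j, 1 ≤ j → j ≤ K → (Ycf a j ω = f j ∧ Dcf a j ω = g j)}
          = μ[|{ω | X ω = x}]
              {ω | ∀ j, 1 ≤ j → j ≤ K → (Ycf a j ω = f j ∧ Dcf a j ω = g j)})
    -- Assumption 1 (ii): positivity
    (hposA : ∀ x, μ {ω | X ω = x} ≠ 0 → ∀ a', (a' = 0 ∨ a' = 1) →
      μ ({ω | X ω = x} ∩ {ω | A ω = a'}) ≠ 0)
    -- Assumption 1 (iii): consistency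
    (hconsY : ∀ k ω, Y k ω = A ω * Ycf 1 k ω + (1 - A ω) * Ycf 0 k ω)
    (hconsD : ∀ k ω, D k ω = A ω * Dcf 1 k ω + (1 - A ω) * Dcf 0 k ω)
    -- counterfactual indicators Y^{a,d̄=0}_k under the joint intervention
    -- do(A = a, D̄_K = 0) eliminating the competing event
    (Ycf0 : ℕ → ℕ → Ω → ℕ)
    (hYcf0m : ∀ a k, Measurable (Ycf0 a k))
    (hYcf0bin : ∀ a k ω, Ycf0 a k ω = 0 ∨ Ycf0 a k ω = 1)
    (hYcf0mono : ∀ a k ω, Ycf0 a k ω ≤ Ycf0 a (k + 1) ω)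
    -- (Y^{a,d̄=0}_1, …, Y^{a,d̄=0}_K) is conditionally independent of A given X
    -- (stated through the atoms of the discrete counterfactual family)
    (hexch0 : ∀ a a' x, (a = 0 ∨ a = 1) → (a' = 0 ∨ a' = 1) →
      μ {ω | X ω = x} ≠ 0 → μ ({ω | X ω = x} ∩ {ω | A ω = a'}) ≠ 0 →
      ∀ f : ℕ → ℕ,
        μ[|{ω | X ω = x} ∩ {ω | A ω = a'}]
            {ω | ∀ j, 1 ≤ j → j ≤ K → Ycf0 a j ω = f j}
          = μ[|{ω | X ω = x}] {ω | ∀ j, 1 ≤ j → j ≤ K → Ycf0 a j ω = f j})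
    -- Assumption 2 (i): sequential exchangeability — (Y^{a,d̄=0}_k, …, Y^{a,d̄=0}_K)
    -- is conditionally independent of D_k given X = x, A = a, Ȳ_{k−1} = D̄_{k−1} = 0
    (hseqexch : ∀ a x k, (a = 0 ∨ a = 1) → 1 ≤ k → k ≤ K →
      μ ({ω | X ω = x} ∩ {ω | A ω = a} ∩ allZero Y (k - 1) ∩ allZero D (k - 1)) ≠ 0 →
      μ ({ω | X ω = x} ∩ {ω | A ω = a} ∩ allZero Y (k - 1) ∩ allZero D (k - 1)
          ∩ {ω | D k ω = 0}) ≠ 0 →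
      ∀ f : ℕ → ℕ,
        μ[|{ω | X ω = x} ∩ {ω | A ω = a} ∩ allZero Y (k - 1) ∩ allZero D (k - 1)
            ∩ {ω | D k ω = 0}]
            {ω | ∀ l, k ≤ l → l ≤ K → Ycf0 a l ω = f l}
          = μ[|{ω | X ω = x} ∩ {ω | A ω = a} ∩ allZero Y (k - 1) ∩ allZero D (k - 1)]
              {ω | ∀ l, k ≤ l → l ≤ K → Ycf0 a l ω = f l})
    -- Assumption 2 (ii): positivity w.r.t. the competing event
    (hposDcomp : ∀ a x k, (a = 0 ∨ a = 1) → 1 ≤ k → k ≤ K →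
      μ ({ω | X ω = x} ∩ {ω | A ω = a} ∩ allZero Y (k - 1) ∩ allZero D (k - 1)) ≠ 0 →
      μ ({ω | X ω = x} ∩ {ω | A ω = a} ∩ allZero Y (k - 1) ∩ allZero D (k - 1)
          ∩ {ω | D k ω = 0}) ≠ 0)
    -- Assumption 2 (iii): consistency w.r.t. elimination of the competing event:
    -- on the event {A = a, D̄_k = 0} one has Ȳ_k = Ȳ^{a,d̄=0}_k
    (hcons0 : ∀ a ω k, (a = 0 ∨ a = 1) → k ≤ K → A ω = a →
      (∀ l, 1 ≤ l → l ≤ k → D l ω = 0) →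
      ∀ l, 1 ≤ l → l ≤ k → Y l ω = Ycf0 a l ω)
    (k : ℕ) (hk1 : 1 ≤ k) (hkK : k ≤ K) (a : ℕ) (ha : a = 0 ∨ a = 1)
    -- positivity of all conditioning events appearing in the statement
    (hposY : ∀ l x, 1 ≤ l → l ≤ K → μ {ω | X ω = x} ≠ 0 →
      μ (atRiskY Y D X A l x a) ≠ 0)
    (hposD : ∀ l x, 1 ≤ l → l ≤ K → μ {ω | X ω = x} ≠ 0 →
      μ (atRiskD Y D X A l x a) ≠ 0)
    (hposObs : μ (allZero Y (k - 1) ∩ allZero D k ∩ {ω | A ω = a}) ≠ 0)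
    (hposInt : μ (allZero (Ycf0 a) (k - 1)) ≠ 0)
    -- the competing-event hazard is strictly below one up to time k
    (hDlt1 : ∀ l x, 1 ≤ l → l ≤ k → μ {ω | X ω = x} ≠ 0 →
      hazD μ Y D X A l x a < 1) :
    ∃ c : ℝ≥0∞, c ≠ 0 ∧ c ≠ ⊤ ∧
      ∀ x : 𝓧,
        μ[|allZero Y (k - 1) ∩ allZero D k ∩ {ω | A ω = a}] {ω | X ω = x} ≠ 0 →
        μ[|allZero (Ycf0 a) (k - 1)] {ω | X ω = x}
            / μ[|allZero Y (k - 1) ∩ allZero D k ∩ {ω | A ω = a}] {ω | X ω = x}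
          = c / (μ[|{ω | X ω = x}] {ω | A ω = a}
              * ∏ l ∈ Icc 1 k, (1 - hazD μ Y D X A l x a)) := by
  classical
  obtain ⟨k', rfl⟩ : ∃ k', k = k' + 1 := ⟨k - 1, by omega⟩
  simp only [Nat.add_sub_cancel] at hposObs hposInt ⊢
  -- measurability facts
  have mW : ∀ x : 𝓧, MeasurableSet {ω | X ω = x} := fun x => hXm (measurableSet_singleton x)
  have mA : MeasurableSet {ω | A ω = a} := hAm (measurableSet_singleton a)
  have mYs : ∀ m, MeasurableSet (allZero Y m) := measurableSet_allZero hYm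
  have mDs : ∀ m, MeasurableSet (allZero D m) := measurableSet_allZero hDm
  have mDk : ∀ m, MeasurableSet {ω | D m ω = 0} := fun m => hDm m (measurableSet_singleton 0)
  have mB : MeasurableSet (allZero Y k' ∩ allZero D (k'+1) ∩ {ω | A ω = a}) :=
    ((mYs _).inter (mDs _)).inter mA
  have mG : MeasurableSet (allZero (Ycf0 a) k') := measurableSet_allZero (hYcf0m a) _
  refine ⟨μ (allZero Y k' ∩ allZero D (k'+1) ∩ {ω | A ω = a}) * (μ (allZero (Ycf0 a) k'))⁻¹,
    mul_ne_zero hposObs (ENNReal.inv_ne_zero.2 (measure_ne_top μ _)),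
    ENNReal.mul_ne_top (measure_ne_top μ _) (ENNReal.inv_ne_top.2 hposInt), ?_⟩
  intro x hx
  -- basic nonzero facts at this x
  have hxBW : μ ((allZero Y k' ∩ allZero D (k'+1) ∩ {ω | A ω = a}) ∩ {ω | X ω = x}) ≠ 0 := by
    intro h0
    apply hx
    rw [cond_apply mB μ {ω | X ω = x}, h0, mul_zero]
  have hμW : μ {ω | X ω = x} ≠ 0 :=
    fun h0 => hxBW (measure_mono_null Set.inter_subset_right h0)
  -- the canonical at-risk sets
  set CC : ℕ → Set Ω :=
    fun m => {ω | X ω = x} ∩ {ω | A ω = a} ∩ allZero Y m ∩ allZero D m with hCC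
  have mC : ∀ m, MeasurableSet (CC m) :=
    fun m => (((mW x).inter mA).inter (mYs m)).inter (mDs m)
  have hatD : ∀ m, atRiskD Y D X A (m+1) x a = CC m := by
    intro m
    simp only [atRiskD, Nat.add_sub_cancel, hCC]
    ext ω
    simp only [Set.mem_inter_iff, Set.mem_setOf_eq]
    tauto
  have hatY : ∀ m, atRiskY Y D X A (m+1) x a = CC m ∩ {ω | D (m+1) ω = 0} := by
    intro m
    simp only [atRiskY, Nat.add_sub_cancel, hCC]
    rw [allZero_succ D m]
    ext ω
    simp only [Set.mem_inter_iff, Set.mem_setOf_eq]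
    tauto
  have hposC : ∀ m, m + 1 ≤ K → μ (CC m) ≠ 0 := by
    intro m hm
    have h := hposD (m+1) x (by omega) hm hμW
    rwa [hatD m] at h
  have hposT : ∀ m, m + 1 ≤ K → μ (CC m ∩ {ω | D (m+1) ω = 0}) ≠ 0 := by
    intro m hm
    have h := hposY (m+1) x (by omega) hm hμW
    rwa [hatY m] at h
  have hCsucc : ∀ m, CC (m+1) = (CC m ∩ {ω | D (m+1) ω = 0}) ∩ {ω | Y (m+1) ω = 0} := by
    intro m
    simp only [hCC]
    rw [allZero_succ Y m, allZero_succ D m]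
    ext ω
    simp only [Set.mem_inter_iff, Set.mem_setOf_eq]
    tauto
  -- one-step hazard factorizations
  have hDstep : ∀ m, m + 1 ≤ K → μ (CC m ∩ {ω | D (m+1) ω = 0})
      = μ (CC m) * (1 - hazD μ Y D X A (m+1) x a) := by
    intro m hm
    have hT0 : μ (CC m) ≠ 0 := hposC m hm
    have : IsProbabilityMeasure (μ[|CC m]) := cond_isProbabilityMeasure hT0
    have hcompl : {ω | D (m+1) ω = 0} = {ω | D (m+1) ω = 1}ᶜ := by
      ext ω
      simp only [Set.mem_setOf_eq, Set.mem_compl_iff]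
      rcases hDbin (m+1) ω with h | h <;> omega
    have h1 : μ[|CC m] {ω | D (m+1) ω = 0} = 1 - hazD μ Y D X A (m+1) x a := by
      rw [hcompl, prob_compl_eq_one_sub (show MeasurableSet {ω | D (m+1) ω = 1} from hDm (m+1) (measurableSet_singleton 1))]
      simp only [hazD, hatD m]
    calc μ (CC m ∩ {ω | D (m+1) ω = 0})
        = μ[|CC m] {ω | D (m+1) ω = 0} * μ (CC m) :=
          (cond_mul_eq_inter (mC m) {ω | D (m+1) ω = 0} μ).symm
      _ = μ (CC m) * (1 - hazD μ Y D X A (m+1) x a) := by rw [h1, mul_comm]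
  have hYcond : ∀ m, m + 1 ≤ K → μ[|CC m ∩ {ω | D (m+1) ω = 0}] {ω | Y (m+1) ω = 0}
      = 1 - hazY μ Y D X A (m+1) x a := by
    intro m hm
    have hT0 : μ (CC m ∩ {ω | D (m+1) ω = 0}) ≠ 0 := hposT m hm
    have : IsProbabilityMeasure (μ[|CC m ∩ {ω | D (m+1) ω = 0}]) :=
      cond_isProbabilityMeasure hT0
    have hcompl : {ω | Y (m+1) ω = 0} = {ω | Y (m+1) ω = 1}ᶜ := by
      ext ω
      simp only [Set.mem_setOf_eq, Set.mem_compl_iff]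
      rcases hYbin (m+1) ω with h | h <;> omega
    rw [hcompl, prob_compl_eq_one_sub (show MeasurableSet {ω | Y (m+1) ω = 1} from hYm (m+1) (measurableSet_singleton 1))]
    simp only [hazY, hatY m]
  have hYstep : ∀ m, m + 1 ≤ K → μ ((CC m ∩ {ω | D (m+1) ω = 0}) ∩ {ω | Y (m+1) ω = 0})
      = μ (CC m ∩ {ω | D (m+1) ω = 0}) * (1 - hazY μ Y D X A (m+1) x a) := by
    intro m hm
    calc μ ((CC m ∩ {ω | D (m+1) ω = 0}) ∩ {ω | Y (m+1) ω = 0})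
        = μ[|CC m ∩ {ω | D (m+1) ω = 0}] {ω | Y (m+1) ω = 0}
            * μ (CC m ∩ {ω | D (m+1) ω = 0}) :=
          (cond_mul_eq_inter ((mC m).inter (mDk (m+1))) {ω | Y (m+1) ω = 0} μ).symm
      _ = μ (CC m ∩ {ω | D (m+1) ω = 0}) * (1 - hazY μ Y D X A (m+1) x a) := by
          rw [hYcond m hm, mul_comm]
  -- the observational chain factorization
  have chain : ∀ m, m ≤ K → μ (CC m) = μ ({ω | X ω = x} ∩ {ω | A ω = a})
      * (∏ l ∈ Icc 1 m, (1 - hazD μ Y D X A l x a))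
      * (∏ l ∈ Icc 1 m, (1 - hazY μ Y D X A l x a)) := by
    intro m
    induction m with
    | zero =>
      intro _
      simp [hCC, allZero_zero]
    | succ n ih =>
      intro hm
      rw [hCsucc n, hYstep n hm, hDstep n hm, ih (by omega),
        Finset.prod_Icc_succ_top (by omega : 1 ≤ n + 1) (fun l => 1 - hazD μ Y D X A l x a),
        Finset.prod_Icc_succ_top (by omega : 1 ≤ n + 1) (fun l => 1 - hazY μ Y D X A l x a)]
      ring
  -- Fact 1: factorization of the observational event
  have hBWeq : (allZero Y k' ∩ allZero D (k'+1) ∩ {ω | A ω = a}) ∩ {ω | X ω = x}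
      = CC k' ∩ {ω | D (k'+1) ω = 0} := by
    simp only [hCC]
    rw [allZero_succ D k']
    ext ω
    simp only [Set.mem_inter_iff, Set.mem_setOf_eq]
    tauto
  have hBW : μ ((allZero Y k' ∩ allZero D (k'+1) ∩ {ω | A ω = a}) ∩ {ω | X ω = x})
      = μ ({ω | X ω = x} ∩ {ω | A ω = a})
        * (∏ l ∈ Icc 1 (k'+1), (1 - hazD μ Y D X A l x a))
        * (∏ l ∈ Icc 1 k', (1 - hazY μ Y D X A l x a)) := by
    rw [hBWeq, hDstep k' hkK, chain k' (by omega),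
      Finset.prod_Icc_succ_top (by omega : 1 ≤ k' + 1) (fun l => 1 - hazD μ Y D X A l x a)]
    ring
  -- nonzeroness of all the factors
  have hprod : μ ({ω | X ω = x} ∩ {ω | A ω = a})
      * (∏ l ∈ Icc 1 (k'+1), (1 - hazD μ Y D X A l x a))
      * (∏ l ∈ Icc 1 k', (1 - hazY μ Y D X A l x a)) ≠ 0 := hBW ▸ hxBW
  have hq0 : μ ({ω | X ω = x} ∩ {ω | A ω = a}) ≠ 0 :=
    (mul_ne_zero_iff.1 ((mul_ne_zero_iff.1 hprod).1)).1
  have hd0 : (∏ l ∈ Icc 1 (k'+1), (1 - hazD μ Y D X A l x a)) ≠ 0 :=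
    (mul_ne_zero_iff.1 ((mul_ne_zero_iff.1 hprod).1)).2
  have hy0 : (∏ l ∈ Icc 1 k', (1 - hazY μ Y D X A l x a)) ≠ 0 :=
    (mul_ne_zero_iff.1 hprod).2
  have hdt : (∏ l ∈ Icc 1 (k'+1), (1 - hazD μ Y D X A l x a)) ≠ ⊤ :=
    ne_top_of_le_ne_top ENNReal.one_ne_top
      (Finset.prod_le_one (fun _ _ => zero_le) (fun _ _ => tsub_le_self))
  have hyt : (∏ l ∈ Icc 1 k', (1 - hazY μ Y D X A l x a)) ≠ ⊤ :=
    ne_top_of_le_ne_top ENNReal.one_ne_top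
      (Finset.prod_le_one (fun _ _ => zero_le) (fun _ _ => tsub_le_self))
  -- Fact 2: identification of the interventional event (g-formula)
  set RR : ℕ → Set Ω := fun m => {ω | ∀ l, m+1 ≤ l → l ≤ k' → Ycf0 a l ω = 0} with hRR
  have hident : ∀ d m, m + d = k' →
      μ[|CC m] (RR m) = ∏ l ∈ Icc (m+1) k', (1 - hazY μ Y D X A l x a) := by
    intro d
    induction d with
    | zero =>
      intro m hm
      have hmk : m = k' := by omega
      subst hmk
      have h1 : RR m = Set.univ := by
        simp only [hRR]
        ext ω
        simp only [Set.mem_setOf_eq, Set.mem_univ, iff_true]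
        intro l hl1 hl2
        omega
      have : IsProbabilityMeasure (μ[|CC m]) :=
        cond_isProbabilityMeasure (hposC m (by omega))
      rw [h1, Finset.Icc_eq_empty (by omega), Finset.prod_empty]
      exact measure_univ
    | succ n ih =>
      intro m hm
      have hm1 : m + 1 ≤ k' := by omega
      have hmK : m + 1 ≤ K := by omega
      have hC0 : μ (CC m) ≠ 0 := hposC m (by omega)
      have hT0 : μ (CC m ∩ {ω | D (m+1) ω = 0}) ≠ 0 :=
        hposDcomp a x (m+1) ha (by omega) hmK hC0
      have mT : MeasurableSet (CC m ∩ {ω | D (m+1) ω = 0}) := (mC m).inter (mDk (m+1))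
      -- sequential exchangeability: dropping the conditioning on D_{m+1} = 0
      have htrans : μ[|CC m ∩ {ω | D (m+1) ω = 0}] (RR m) = μ[|CC m] (RR m) := by
        have h := measure_zeros_eq (V := Ycf0 a) (b := m + 1) (k := k' + 1) (K := K)
          (μ[|CC m ∩ {ω | D (m+1) ω = 0}]) (μ[|CC m]) (hYcf0m a)
          (hYcf0mono a) (hYcf0bin a) (show 1 ≤ k' + 1 by omega) (show m + 1 ≤ k' + 1 by omega)
          hkK (fun f => hseqexch a x (m+1) ha (by omega) hmK hC0 hT0 f)
        simp only [Nat.add_sub_cancel] at h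
        exact h
      -- consistency: converting the first counterfactual coordinate to the observed one
      have hconsSet : (CC m ∩ {ω | D (m+1) ω = 0}) ∩ RR m
          = (CC m ∩ {ω | D (m+1) ω = 0}) ∩ ({ω | Y (m+1) ω = 0} ∩ RR (m+1)) := by
        simp only [hCC, hRR, allZero]
        ext ω
        simp only [Set.mem_inter_iff, Set.mem_setOf_eq]
        constructor
        · rintro ⟨⟨⟨⟨⟨hX, hA⟩, hY⟩, hD⟩, hD1⟩, hR⟩
          have hDz : ∀ l, 1 ≤ l → l ≤ m + 1 → D l ω = 0 := by
            intro l h1 h2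
            rcases Nat.lt_or_ge l (m+1) with h | h
            · exact hD l h1 (by omega)
            · have hl : l = m + 1 := by omega
              rw [hl]; exact hD1
          have hYeq := hcons0 a ω (m+1) ha (by omega) hA hDz
          refine ⟨⟨⟨⟨⟨hX, hA⟩, hY⟩, hD⟩, hD1⟩, ?_, ?_⟩
          · rw [hYeq (m+1) (by omega) le_rfl]
            exact hR (m+1) le_rfl hm1
          · intro l h1 h2
            exact hR l (by omega) h2
        · rintro ⟨⟨⟨⟨⟨hX, hA⟩, hY⟩, hD⟩, hD1⟩, hY1, hR⟩
          have hDz : ∀ l, 1 ≤ l → l ≤ m + 1 → D l ω = 0 := by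
            intro l h1 h2
            rcases Nat.lt_or_ge l (m+1) with h | h
            · exact hD l h1 (by omega)
            · have hl : l = m + 1 := by omega
              rw [hl]; exact hD1
          have hYeq := hcons0 a ω (m+1) ha (by omega) hA hDz
          refine ⟨⟨⟨⟨⟨hX, hA⟩, hY⟩, hD⟩, hD1⟩, ?_⟩
          intro l h1 h2
          rcases Nat.lt_or_ge l (m+2) with h | h
          · have hl : l = m + 1 := by omega
            rw [hl, ← hYeq (m+1) (by omega) le_rfl]
            exact hY1
          · exact hR l (by omega) h2
      have hQ := ih (m+1) (by omega)
      have hCm1 : μ (CC (m+1))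
          = (1 - hazY μ Y D X A (m+1) x a) * μ (CC m ∩ {ω | D (m+1) ω = 0}) := by
        rw [hCsucc m, ← cond_mul_eq_inter mT {ω | Y (m+1) ω = 0} μ, hYcond m hmK]
      have hkey : μ[|CC m] (RR m)
          = (1 - hazY μ Y D X A (m+1) x a) * μ[|CC (m+1)] (RR (m+1)) := by
        rw [← htrans, cond_apply mT μ (RR m), hconsSet, ← Set.inter_assoc, ← hCsucc m,
          ← cond_mul_eq_inter (mC (m+1)) (RR (m+1)) μ, hCm1]
        have hfin : μ (CC m ∩ {ω | D (m+1) ω = 0}) ≠ ⊤ := measure_ne_top μ _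
        calc (μ (CC m ∩ {ω | D (m+1) ω = 0}))⁻¹
              * (μ[|CC (m+1)] (RR (m+1))
                * ((1 - hazY μ Y D X A (m+1) x a) * μ (CC m ∩ {ω | D (m+1) ω = 0})))
            = ((μ (CC m ∩ {ω | D (m+1) ω = 0}))⁻¹ * μ (CC m ∩ {ω | D (m+1) ω = 0}))
              * ((1 - hazY μ Y D X A (m+1) x a) * μ[|CC (m+1)] (RR (m+1))) := by ring
          _ = (1 - hazY μ Y D X A (m+1) x a) * μ[|CC (m+1)] (RR (m+1)) := by
              rw [ENNReal.inv_mul_cancel hT0 hfin, one_mul]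
      rw [hkey, hQ, ← prod_Icc_bot hm1 (fun l => 1 - hazY μ Y D X A l x a)]
  -- exchangeability: dropping the conditioning on A = a
  have hWA : μ ({ω | X ω = x} ∩ {ω | A ω = a}) ≠ 0 := hposA x hμW a ha
  have hbase : μ[|{ω | X ω = x} ∩ {ω | A ω = a}] (allZero (Ycf0 a) k')
      = μ[|{ω | X ω = x}] (allZero (Ycf0 a) k') := by
    have h := measure_zeros_eq (V := Ycf0 a) (b := 1) (k := k' + 1) (K := K)
      (μ[|{ω | X ω = x} ∩ {ω | A ω = a}]) (μ[|{ω | X ω = x}])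
      (hYcf0m a) (hYcf0mono a) (hYcf0bin a) (show 1 ≤ k' + 1 by omega)
      (show 1 ≤ k' + 1 by omega) hkK (fun f => hexch0 a a x ha ha hμW hWA f)
    simp only [Nat.add_sub_cancel] at h
    exact h
  have hGid : μ[|{ω | X ω = x}] (allZero (Ycf0 a) k')
      = ∏ l ∈ Icc 1 k', (1 - hazY μ Y D X A l x a) := by
    rw [← hbase]
    have hC0eq : CC 0 = {ω | X ω = x} ∩ {ω | A ω = a} := by
      simp only [hCC]
      rw [allZero_zero, allZero_zero, Set.inter_univ, Set.inter_univ]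
    have hRR0 : RR 0 = allZero (Ycf0 a) k' := by
      simp only [hRR, allZero]
    have h := hident k' 0 (by omega)
    rw [hC0eq, hRR0] at h
    exact h
  have hGW : μ ({ω | X ω = x} ∩ allZero (Ycf0 a) k')
      = μ {ω | X ω = x} * ∏ l ∈ Icc 1 k', (1 - hazY μ Y D X A l x a) := by
    have h := cond_apply (mW x) μ (allZero (Ycf0 a) k')
    calc μ ({ω | X ω = x} ∩ allZero (Ycf0 a) k')
        = (μ {ω | X ω = x} * (μ {ω | X ω = x})⁻¹)
          * μ ({ω | X ω = x} ∩ allZero (Ycf0 a) k') := by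
          rw [ENNReal.mul_inv_cancel hμW (measure_ne_top μ _), one_mul]
      _ = μ {ω | X ω = x}
          * ((μ {ω | X ω = x})⁻¹ * μ ({ω | X ω = x} ∩ allZero (Ycf0 a) k')) := by ring
      _ = μ {ω | X ω = x} * ∏ l ∈ Icc 1 k', (1 - hazY μ Y D X A l x a) := by
          rw [← h, hGid]
  -- final computation
  rw [cond_apply mG μ {ω | X ω = x}, cond_apply mB μ {ω | X ω = x},
    cond_apply (mW x) μ {ω | A ω = a},
    Set.inter_comm (allZero (Ycf0 a) k') {ω | X ω = x}, hGW, hBW]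
  exact ennreal_calc (μ (allZero (Ycf0 a) k'))
    (μ (allZero Y k' ∩ allZero D (k'+1) ∩ {ω | A ω = a}))
    (μ {ω | X ω = x}) (μ ({ω | X ω = x} ∩ {ω | A ω = a}))
    (∏ l ∈ Icc 1 (k'+1), (1 - hazD μ Y D X A l x a))
    (∏ l ∈ Icc 1 k', (1 - hazY μ Y D X A l x a))
    hposInt (measure_ne_top μ _) hposObs (measure_ne_top μ _) hμW (measure_ne_top μ _)
    hq0 (measure_ne_top μ _) hd0 hdt hy0 hyt

end Stmt11
end
end
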